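/- arXiv:2206.04932 — 6 statements merged into one kernel-verified Lean document; each statement's English description precedes it below -/
import Mathlib

section
/- Let μ be a probability measure on ℝ. Suppose there exist a ≥ 0, b ∈ ℝ and a measurable function k : ℝ → [0,∞) that is nondecreasing on (−∞,0), nonincreasing on (0,∞), not Lebesgue-almost-everywhere zero, satisfies ∫_ℝ min(1,t²)·k(t)/|t| dt < ∞, and such that F_μ(z) = z − b − a/z + ∫_ℝ (1/(t−z) − t/(1+t²))·|t|·k(t) dt for all z ∈ ℂ⁺. Set α = inf{x ∈ ℝ : k(x) ≠ 0} ∈ [−∞,0] and β = sup{x ∈ ℝ : k(x) ≠ 0} ∈ [0,∞]. Then the restriction of μ to the open interval (α,β) is absolutely continuous with respect to Lebesgue measure. -/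
open MeasureTheory Complex Set

/-- The Cauchy transform of a measure on ℝ. -/
noncomputable def cauchyTransform (μ : Measure ℝ) (z : ℂ) : ℂ :=
  ∫ x, (z - (x : ℂ))⁻¹ ∂μ

/-- The F-transform (reciprocal Cauchy transform) of a measure on ℝ. -/
noncomputable def Ftransform (μ : Measure ℝ) (z : ℂ) : ℂ :=
  (cauchyTransform μ z)⁻¹

open Real Filter

lemma poisson_cont (t ε : ℝ) (hε : 0 < ε) :
    Continuous (fun x : ℝ => ε / ((x - t)^2 + ε^2)) := by
  apply continuous_const.div (by continuity)
  intro x; positivity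

lemma poisson_interval (t ε : ℝ) (hε : 0 < ε) (p q : ℝ) :
    ∫ x in p..q, ε / ((x - t)^2 + ε^2) =
      Real.arctan ((q - t)/ε) - Real.arctan ((p - t)/ε) := by
  have h : ∀ x ∈ Set.uIcc p q, HasDerivAt (fun y : ℝ => Real.arctan ((y - t)/ε))
      (ε / ((x - t)^2 + ε^2)) x := by
    intro x _
    have h1 : HasDerivAt (fun y : ℝ => (y - t)/ε) (1/ε) x := by
      simpa using (((hasDerivAt_id x).sub_const t).div_const ε)
    have h2 := (Real.hasDerivAt_arctan ((x - t)/ε)).comp x h1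
    refine h2.congr_deriv ?_
    field_simp
    ring
  rw [intervalIntegral.integral_eq_sub_of_hasDerivAt h
    ((poisson_cont t ε hε).intervalIntegrable p q)]

lemma levy_integrand_integrable (k : ℝ → ℝ) (hk_meas : Measurable k)
    (hk_nonneg : ∀ t, 0 ≤ k t)
    (hk_int : Integrable (fun t : ℝ => min 1 (t ^ 2) * k t / |t|))
    (z : ℂ) (hz : 0 < z.im) :
    Integrable (fun t : ℝ =>
      (((t : ℂ) - z)⁻¹ - (t : ℂ) / (1 + (t : ℂ) ^ 2)) * ((|t| * k t : ℝ) : ℂ)) := by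
  set C : ℝ := ((z.im)⁻¹ + 1) + (1 + ‖z‖) * (2 * ‖z‖ + 2) / z.im + 2 * (1 + ‖z‖) with hC
  have hzn : (0:ℝ) ≤ ‖z‖ := norm_nonneg z
  have hC1 : (z.im)⁻¹ + 1 ≤ C := by
    have h1 : 0 ≤ (1 + ‖z‖) * (2 * ‖z‖ + 2) / z.im := by positivity
    have h2 : 0 ≤ 2 * (1 + ‖z‖) := by positivity
    simp only [hC]; linarith
  have hC2 : (1 + ‖z‖) * (2 * ‖z‖ + 2) / z.im ≤ C := by
    have h1 : 0 ≤ (z.im)⁻¹ + 1 := by positivity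
    have h2 : 0 ≤ 2 * (1 + ‖z‖) := by positivity
    simp only [hC]; linarith
  have hC3 : 2 * (1 + ‖z‖) ≤ C := by
    have h1 : 0 ≤ (z.im)⁻¹ + 1 := by positivity
    have h2 : 0 ≤ (1 + ‖z‖) * (2 * ‖z‖ + 2) / z.im := by positivity
    simp only [hC]; linarith
  have hC0 : 0 ≤ C := le_trans (by positivity) hC1
  apply Integrable.mono' (hk_int.const_mul C)
  · apply Measurable.aestronglyMeasurable
    fun_prop
  · filter_upwards [compl_mem_ae_iff.2 (volume_singleton (a := (0:ℝ)))] with t ht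
    have ht0 : t ≠ 0 := by simpa using ht
    have htabs : 0 < |t| := abs_pos.2 ht0
    have habs2 : t^2 = |t| * |t| := by rw [← _root_.sq_abs]; ring
    have hw : ((t:ℂ) - z) ≠ 0 := by
      intro h
      have : ((t:ℂ) - z).im = 0 := by rw [h]; simp
      simp only [Complex.sub_im, Complex.ofReal_im] at this
      linarith
    have hwn : z.im ≤ ‖(t:ℂ) - z‖ := by
      have := Complex.abs_im_le_norm ((t:ℂ) - z)
      simp only [Complex.sub_im, Complex.ofReal_im, zero_sub, abs_neg] at this
      calc z.im ≤ |z.im| := le_abs_self _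
        _ ≤ _ := this
    have hwpos : 0 < ‖(t:ℂ) - z‖ := lt_of_lt_of_le hz hwn
    have hct : (1 : ℂ) + (t:ℂ)^2 = ((1 + t^2 : ℝ) : ℂ) := by push_cast; ring
    have hctn : ‖(1 : ℂ) + (t:ℂ)^2‖ = 1 + t^2 := by
      rw [hct, Complex.norm_real, Real.norm_eq_abs,
        abs_of_pos (by positivity : (0:ℝ) < 1 + t^2)]
    have hct0 : (1 : ℂ) + (t:ℂ)^2 ≠ 0 := by
      rw [hct]
      simp only [ne_eq, Complex.ofReal_eq_zero]
      positivity
    -- core bound on the kernel part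
    have key : ‖((t : ℂ) - z)⁻¹ - (t : ℂ) / (1 + (t : ℂ) ^ 2)‖ ≤ C * min 1 (t^2) / t^2 := by
      rcases le_total (|t|) 1 with h1 | h1
      · -- |t| ≤ 1
        have hmin : min 1 (t^2) = t^2 := by
          rw [min_eq_right]; nlinarith
        rw [hmin, mul_div_assoc, div_self (by positivity : (t:ℝ)^2 ≠ 0), mul_one]
        calc ‖((t : ℂ) - z)⁻¹ - (t : ℂ) / (1 + (t : ℂ) ^ 2)‖
            ≤ ‖((t : ℂ) - z)⁻¹‖ + ‖(t : ℂ) / (1 + (t : ℂ) ^ 2)‖ := norm_sub_le _ _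
          _ ≤ (z.im)⁻¹ + 1 := by
              gcongr
              · rw [norm_inv]
                exact inv_anti₀ hz hwn
              · rw [norm_div, hctn, Complex.norm_real, Real.norm_eq_abs,
                  div_le_one (by positivity)]
                nlinarith
          _ ≤ C := hC1
      · -- 1 ≤ |t|
        have hmin : min 1 (t^2) = 1 := by
          rw [min_eq_left]; nlinarith
        rw [hmin]
        have hid : ((t : ℂ) - z)⁻¹ - (t : ℂ) / (1 + (t : ℂ) ^ 2)
            = (1 + (t:ℂ) * z) / (((t:ℂ) - z) * (1 + (t:ℂ)^2)) := by
          field_simp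
          ring
        have hnum : ‖(1 : ℂ) + (t:ℂ) * z‖ ≤ |t| * (1 + ‖z‖) := by
          calc ‖(1 : ℂ) + (t:ℂ) * z‖ ≤ ‖(1:ℂ)‖ + ‖(t:ℂ) * z‖ := norm_add_le _ _
            _ = 1 + |t| * ‖z‖ := by
                rw [norm_mul, Complex.norm_real, norm_one, Real.norm_eq_abs]
            _ ≤ |t| * (1 + ‖z‖) := by nlinarith
        rw [hid, norm_div, norm_mul, hctn,
          div_le_div_iff₀ (by positivity) (by positivity : (0:ℝ) < t^2)]
        -- goal : ‖1 + t*z‖ * t^2 ≤ C * 1 * (‖t - z‖ * (1 + t^2))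
        rcases le_total (2 * ‖z‖ + 2) (|t|) with h2 | h2
        · -- |t| large
          have hwn2 : |t|/2 ≤ ‖(t:ℂ) - z‖ := by
            have := norm_sub_norm_le ((t:ℂ)) z
            rw [Complex.norm_real, Real.norm_eq_abs] at this
            linarith
          calc ‖(1:ℂ) + (t:ℂ) * z‖ * t^2 ≤ (|t| * (1 + ‖z‖)) * t^2 := by
                exact mul_le_mul_of_nonneg_right hnum (by positivity)
            _ = (2 * (1 + ‖z‖)) * ((|t|/2) * t^2) := by ring
            _ ≤ C * (‖(t:ℂ) - z‖ * (1 + t^2)) := by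
                apply mul_le_mul hC3 _ (by positivity) hC0
                apply mul_le_mul hwn2 (by nlinarith) (by positivity) (le_of_lt hwpos)
            _ = C * 1 * (‖(t:ℂ) - z‖ * (1 + t^2)) := by ring
        · -- middle |t|
          have hmid : t^2 ≤ (2 * ‖z‖ + 2) * |t| := by nlinarith
          calc ‖(1:ℂ) + (t:ℂ) * z‖ * t^2
              ≤ (|t| * (1 + ‖z‖)) * ((2 * ‖z‖ + 2) * |t|) := by
                apply mul_le_mul hnum hmid (by positivity) (by positivity)
            _ = (1 + ‖z‖) * (2 * ‖z‖ + 2) * t^2 := by rw [habs2]; ring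
            _ = ((1 + ‖z‖) * (2 * ‖z‖ + 2) / z.im) * (z.im * t^2) := by
                field_simp
            _ ≤ C * (‖(t:ℂ) - z‖ * (1 + t^2)) := by
                apply mul_le_mul hC2 _ (by positivity) hC0
                apply mul_le_mul hwn (by nlinarith) (by positivity) (le_of_lt hwpos)
            _ = C * 1 * (‖(t:ℂ) - z‖ * (1 + t^2)) := by ring
    calc ‖(((t : ℂ) - z)⁻¹ - (t : ℂ) / (1 + (t : ℂ) ^ 2)) * ((|t| * k t : ℝ) : ℂ)‖
        = ‖((t : ℂ) - z)⁻¹ - (t : ℂ) / (1 + (t : ℂ) ^ 2)‖ * (|t| * k t) := by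
          rw [norm_mul, Complex.norm_real, Real.norm_eq_abs,
            _root_.abs_of_nonneg (mul_nonneg (abs_nonneg t) (hk_nonneg t))]
      _ ≤ (C * min 1 (t^2) / t^2) * (|t| * k t) :=
          mul_le_mul_of_nonneg_right key (mul_nonneg (abs_nonneg t) (hk_nonneg t))
      _ = C * (min 1 (t^2) * k t / |t|) := by
          rw [show (t:ℝ)^2 = |t|^2 from (_root_.sq_abs t).symm]
          field_simp

-- pointwise: imaginary part of the Pick integrand
lemma levy_im_eq (k : ℝ → ℝ) (x ε : ℝ) (hε : 0 < ε) (t : ℝ) :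
    ((((t : ℂ) - ((x : ℂ) + (ε : ℂ) * Complex.I))⁻¹ -
        (t : ℂ) / (1 + (t : ℂ) ^ 2)) * ((|t| * k t : ℝ) : ℂ)).im
      = ε / ((t - x)^2 + ε^2) * (|t| * k t) := by
  set z : ℂ := (x : ℂ) + (ε : ℂ) * Complex.I with hzdef
  have hzre : z.re = x := by simp [hzdef]
  have hzim : z.im = ε := by simp [hzdef]
  have h1 : ((t : ℂ) / (1 + (t : ℂ) ^ 2)) = (((t / (1 + t^2)) : ℝ) : ℂ) := by
    push_cast; ring
  have h2 : (((t : ℂ) - z)⁻¹).im = ε / ((t - x)^2 + ε^2) := by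
    rw [Complex.inv_im]
    have h2a : ((t:ℂ) - z).im = -ε := by simp [hzim]
    have hre : ((t:ℂ) - z).re = t - x := by simp [hzre]
    rw [Complex.normSq_apply, h2a, hre]
    ring_nf
  rw [Complex.mul_im, Complex.ofReal_im, Complex.ofReal_re, Complex.sub_im, h2, h1,
    Complex.ofReal_im]
  ring

lemma levy_poisson_integrable (k : ℝ → ℝ) (hk_meas : Measurable k)
    (hk_nonneg : ∀ t, 0 ≤ k t)
    (hk_int : Integrable (fun t : ℝ => min 1 (t ^ 2) * k t / |t|))
    (x ε : ℝ) (hε : 0 < ε) :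
    Integrable (fun t : ℝ => ε / ((t - x)^2 + ε^2) * (|t| * k t)) := by
  have hz : (0:ℝ) < ((x : ℂ) + (ε : ℂ) * Complex.I).im := by simp [hε]
  have h := (levy_integrand_integrable k hk_meas hk_nonneg hk_int _ hz).im (𝕜 := ℂ)
  simp only [RCLike.im_to_complex] at h
  exact h.congr (Filter.Eventually.of_forall (fun t => levy_im_eq k x ε hε t))

lemma pois_mu_integrable (μ : Measure ℝ) [IsProbabilityMeasure μ] (x ε : ℝ) (hε : 0 < ε) :
    Integrable (fun t : ℝ => ε / ((x - t)^2 + ε^2)) μ := by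
  apply Integrable.mono' (integrable_const (ε⁻¹))
  · exact (Continuous.aestronglyMeasurable (by
      apply continuous_const.div (by continuity)
      intro s; positivity))
  · filter_upwards with s
    rw [Real.norm_eq_abs, _root_.abs_of_nonneg (by positivity)]
    calc ε / ((x - s)^2 + ε^2) ≤ ε / (ε^2) := by
          apply div_le_div_of_nonneg_left (le_of_lt hε) (by positivity)
          nlinarith [sq_nonneg (x - s)]
      _ = ε⁻¹ := by rw [sq, div_mul_cancel_left₀ hε.ne']

lemma imF_ge (μ : Measure ℝ) [IsProbabilityMeasure μ] (a b : ℝ) (ha : 0 ≤ a)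
    (k : ℝ → ℝ) (hk_meas : Measurable k) (hk_nonneg : ∀ t, 0 ≤ k t)
    (hk_int : Integrable (fun t : ℝ => min 1 (t ^ 2) * k t / |t|))
    (hF : ∀ z : ℂ, 0 < z.im →
      Ftransform μ z = z - (b : ℂ) - (a : ℂ) / z +
        ∫ t : ℝ, (((t : ℂ) - z)⁻¹ - (t : ℂ) / (1 + (t : ℂ) ^ 2)) * ((|t| * k t : ℝ) : ℂ))
    (x ε : ℝ) (hε : 0 < ε) :
    ε + ∫ t : ℝ, ε / ((t - x)^2 + ε^2) * (|t| * k t) ≤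
      (Ftransform μ ((x : ℂ) + (ε : ℂ) * Complex.I)).im := by
  set z : ℂ := (x : ℂ) + (ε : ℂ) * Complex.I with hzdef
  have hzre : z.re = x := by simp [hzdef]
  have hzim : z.im = ε := by simp [hzdef]
  have hz : 0 < z.im := by rw [hzim]; exact hε
  have hint := levy_integrand_integrable k hk_meas hk_nonneg hk_int z hz
  rw [hF z hz]
  have him : (∫ t : ℝ, (((t : ℂ) - z)⁻¹ - (t : ℂ) / (1 + (t : ℂ) ^ 2)) * ((|t| * k t : ℝ) : ℂ)).im
      = ∫ t : ℝ, ε / ((t - x)^2 + ε^2) * (|t| * k t) := by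
    have hcongr := integral_im (𝕜 := ℂ) hint
    simp only [RCLike.im_to_complex] at hcongr
    rw [← hcongr]
    congr 1
    ext t
    have h1 : ((t : ℂ) / (1 + (t : ℂ) ^ 2)) = (((t / (1 + t^2)) : ℝ) : ℂ) := by
      push_cast
      ring
    have h2 : (((t : ℂ) - z)⁻¹).im = ε / ((t - x)^2 + ε^2) := by
      rw [Complex.inv_im]
      have : ((t:ℂ) - z).im = -ε := by simp [hzim]
      have hre : ((t:ℂ) - z).re = t - x := by simp [hzre]
      rw [this, Complex.normSq_apply, hre]
      rw [Complex.sub_im, Complex.ofReal_im, hzim]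
      ring_nf
    -- im of product with real scalar
    rw [Complex.mul_im]
    have h3 : (((|t| * k t : ℝ)) : ℂ).im = 0 := Complex.ofReal_im _
    have h4 : (((|t| * k t : ℝ)) : ℂ).re = |t| * k t := Complex.ofReal_re _
    rw [h3, h4, Complex.sub_im, h2, h1, Complex.ofReal_im]
    ring
  rw [Complex.add_im, him]
  have him2 : ((z : ℂ) - (b:ℂ) - (a:ℂ)/z).im = ε + a * ε / Complex.normSq z := by
    rw [Complex.sub_im, Complex.sub_im, Complex.ofReal_im, Complex.div_im]
    simp only [Complex.ofReal_im, Complex.ofReal_re, hzim]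
    ring
  rw [him2]
  have : 0 ≤ a * ε / Complex.normSq z := by
    have h0 : 0 < Complex.normSq z := by
      rw [Complex.normSq_pos]
      intro h
      rw [h] at hz; simp at hz
    positivity
  linarith

lemma cauchy_integrable (μ : Measure ℝ) [IsProbabilityMeasure μ] (z : ℂ) (hz : 0 < z.im) :
    Integrable (fun t : ℝ => (z - (t : ℂ))⁻¹) μ := by
  apply Integrable.mono' (integrable_const ((z.im)⁻¹))
  · apply Measurable.aestronglyMeasurable; fun_prop
  · filter_upwards with t
    rw [norm_inv]
    apply inv_anti₀ hz
    have := Complex.abs_im_le_norm (z - (t:ℂ))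
    simp only [Complex.sub_im, Complex.ofReal_im, sub_zero] at this
    calc z.im ≤ |z.im| := le_abs_self _
      _ ≤ _ := this

lemma poisson_mu_eq (μ : Measure ℝ) [IsProbabilityMeasure μ] (x ε : ℝ) (hε : 0 < ε) :
    (cauchyTransform μ ((x : ℂ) + (ε : ℂ) * Complex.I)).im
      = - ∫ t, ε / ((x - t)^2 + ε^2) ∂μ := by
  set z : ℂ := (x : ℂ) + (ε : ℂ) * Complex.I with hzdef
  have hzre : z.re = x := by simp [hzdef]
  have hzim : z.im = ε := by simp [hzdef]
  have hz : 0 < z.im := by rw [hzim]; exact hε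
  have hint := cauchy_integrable μ z hz
  have hcongr := integral_im (𝕜 := ℂ) hint
  simp only [RCLike.im_to_complex] at hcongr
  rw [cauchyTransform, ← hcongr, ← integral_neg]
  congr 1
  ext t
  rw [Complex.inv_im, Complex.normSq_apply]
  simp only [Complex.sub_re, Complex.sub_im, Complex.ofReal_re, Complex.ofReal_im, hzre, hzim,
    sub_zero]
  ring

lemma poisson_mu_le (μ : Measure ℝ) [IsProbabilityMeasure μ] (x ε : ℝ) (hε : 0 < ε)
    (c₀ : ℝ) (hc₀ : 0 < c₀)
    (hbound : c₀ ≤ (Ftransform μ ((x : ℂ) + (ε : ℂ) * Complex.I)).im) :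
    ∫ t, ε / ((x - t)^2 + ε^2) ∂μ ≤ 1 / c₀ := by
  set z : ℂ := (x : ℂ) + (ε : ℂ) * Complex.I with hzdef
  set F : ℂ := Ftransform μ z with hFdef
  have hFne : F ≠ 0 := by
    intro h
    rw [h] at hbound
    simp only [Complex.zero_im] at hbound
    linarith
  have hG : cauchyTransform μ z = F⁻¹ := by
    rw [hFdef, Ftransform, inv_inv]
  have him : (cauchyTransform μ z).im = -F.im / Complex.normSq F := by
    rw [hG, Complex.inv_im]
  have hpois : ∫ t, ε / ((x - t)^2 + ε^2) ∂μ = F.im / Complex.normSq F := by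
    have := poisson_mu_eq μ x ε hε
    rw [← hzdef] at this
    rw [him, neg_div] at this
    linarith [this]
  rw [hpois]
  have hFim : 0 < F.im := lt_of_lt_of_le hc₀ hbound
  have hns : c₀ * F.im ≤ Complex.normSq F := by
    rw [Complex.normSq_apply]
    nlinarith [sq_nonneg F.re, hbound]
  calc F.im / Complex.normSq F ≤ F.im / (c₀ * F.im) := by
        apply div_le_div_of_nonneg_left (by linarith) (mul_pos hc₀ hFim) hns
    _ = 1 / c₀ := by
        rw [mul_comm c₀ F.im, div_mul_eq_div_div, div_self hFim.ne']

lemma measure_open_le (μ : Measure ℝ) [IsProbabilityMeasure μ] (U : Set ℝ) (hU : IsOpen U)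
    (M ε₀ : ℝ) (hM : 0 ≤ M) (hε₀ : 0 < ε₀)
    (hP : ∀ x ∈ U, ∀ ε : ℝ, 0 < ε → ε ≤ ε₀ → ∫ t, ε / ((x - t)^2 + ε^2) ∂μ ≤ M) :
    ENNReal.ofReal π * μ U ≤ ENNReal.ofReal M * volume U := by
  have hUm : MeasurableSet U := hU.measurableSet
  set e : ℕ → ℝ := fun n => ε₀ / (n + 1) with he
  have he_pos : ∀ n, 0 < e n := fun n => by positivity
  have he_le : ∀ n, e n ≤ ε₀ := fun n => by
    rw [he]
    apply div_le_self (le_of_lt hε₀)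
    push_cast; linarith [Nat.cast_nonneg (α := ℝ) n]
  -- the kernels
  have hkc : ∀ n, Continuous (fun p : ℝ × ℝ => e n / ((p.2 - p.1)^2 + (e n)^2)) := by
    intro n
    apply continuous_const.div (by continuity)
    intro p; positivity
  set g : ℕ → ℝ → ENNReal :=
    fun n t => ∫⁻ x in U, ENNReal.ofReal (e n / ((x - t)^2 + (e n)^2)) with hg
  have hgm : ∀ n, Measurable (g n) := by
    intro n
    have hm : Measurable (fun p : ℝ × ℝ => ENNReal.ofReal (e n / ((p.2 - p.1)^2 + (e n)^2))) :=
      (ENNReal.continuous_ofReal.comp (hkc n)).measurable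
    exact Measurable.lintegral_prod_right hm
  -- upper bound for the μ-integral of g n
  have hupper : ∀ n, ∫⁻ t, g n t ∂μ ≤ ENNReal.ofReal M * volume U := by
    intro n
    have hswap : ∫⁻ t, g n t ∂μ
        = ∫⁻ x in U, (∫⁻ t, ENNReal.ofReal (e n / ((x - t)^2 + (e n)^2)) ∂μ) := by
      rw [hg]
      apply lintegral_lintegral_swap
      exact ((ENNReal.continuous_ofReal.comp (hkc n)).measurable.comp
        (measurable_fst.prodMk measurable_snd)).aemeasurable
    rw [hswap]
    calc ∫⁻ x in U, (∫⁻ t, ENNReal.ofReal (e n / ((x - t)^2 + (e n)^2)) ∂μ)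
        ≤ ∫⁻ _ in U, ENNReal.ofReal M := by
          apply setLIntegral_mono measurable_const
          intro x hx
          have hint : Integrable (fun t : ℝ => e n / ((x - t)^2 + (e n)^2)) μ := by
            apply Integrable.mono' (integrable_const ((e n)⁻¹))
            · exact (Continuous.aestronglyMeasurable (by
                apply continuous_const.div (by continuity)
                intro s; positivity))
            · filter_upwards with s
              rw [Real.norm_eq_abs, _root_.abs_of_nonneg (by positivity)]
              calc e n / ((x - s)^2 + (e n)^2) ≤ e n / ((e n)^2) := by
                    apply div_le_div_of_nonneg_left (le_of_lt (he_pos n)) (by positivity)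
                    nlinarith [sq_nonneg (x - s)]
                _ = (e n)⁻¹ := by
                    rw [sq, div_mul_cancel_left₀ (he_pos n).ne']
          rw [← ofReal_integral_eq_lintegral_ofReal hint
            (Filter.Eventually.of_forall (fun s => by positivity))]
          exact ENNReal.ofReal_le_ofReal (hP x hx (e n) (he_pos n) (he_le n))
      _ = ENNReal.ofReal M * volume U := by
          rw [setLIntegral_const, mul_comm]
  -- lower bound for liminf of g at points of U
  have hlower : ∀ t ∈ U, ENNReal.ofReal π ≤ Filter.liminf (fun n => g n t) Filter.atTop := by
    intro t ht
    obtain ⟨δ, hδ, hball⟩ := Metric.isOpen_iff.mp hU t ht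
    rw [Real.ball_eq_Ioo] at hball
    have hseq : ∀ n, ENNReal.ofReal (2 * Real.arctan (δ / e n)) ≤ g n t := by
      intro n
      have hInt : IntegrableOn (fun x : ℝ => e n / ((x - t)^2 + (e n)^2))
          (Ioo (t - δ) (t + δ)) volume := by
        apply ((poisson_cont t (e n) (he_pos n)).integrableOn_Icc
          (a := t - δ) (b := t + δ)).mono_set Ioo_subset_Icc_self
      have hval : ∫ x in Ioo (t - δ) (t + δ), e n / ((x - t)^2 + (e n)^2)
          = 2 * Real.arctan (δ / e n) := by
        rw [← integral_Ioc_eq_integral_Ioo,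
          ← intervalIntegral.integral_of_le (by linarith : t - δ ≤ t + δ),
          poisson_interval t (e n) (he_pos n)]
        rw [add_sub_cancel_left, sub_sub_cancel_left, neg_div, Real.arctan_neg]
        ring
      calc ENNReal.ofReal (2 * Real.arctan (δ / e n))
          = ∫⁻ x in Ioo (t - δ) (t + δ), ENNReal.ofReal (e n / ((x - t)^2 + (e n)^2)) := by
            rw [← ofReal_integral_eq_lintegral_ofReal hInt
              (Filter.Eventually.of_forall (fun s => by positivity)), hval]
        _ ≤ g n t := lintegral_mono_set hball
    have harg : Filter.Tendsto (fun n : ℕ => δ / e n) Filter.atTop Filter.atTop := by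
      have : (fun n : ℕ => δ / e n) = fun n : ℕ => (δ / ε₀) * ((n : ℝ) + 1) := by
        funext n
        rw [he]
        field_simp
      rw [this]
      apply Filter.Tendsto.const_mul_atTop (by positivity)
      exact Filter.tendsto_atTop_add_const_right _ 1 tendsto_natCast_atTop_atTop
    have h1 : Filter.Tendsto (fun n : ℕ => ENNReal.ofReal (2 * Real.arctan (δ / e n)))
        Filter.atTop (nhds (ENNReal.ofReal π)) := by
      apply (ENNReal.continuous_ofReal.tendsto π).comp
      have h2 : Filter.Tendsto (fun n : ℕ => Real.arctan (δ / e n)) Filter.atTop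
          (nhds (π / 2)) :=
        (Real.tendsto_arctan_atTop.mono_right nhdsWithin_le_nhds).comp harg
      have h3 := h2.const_mul (2 : ℝ)
      rw [show (2:ℝ) * (π / 2) = π by ring] at h3
      exact h3
    calc ENNReal.ofReal π
        = Filter.liminf (fun n : ℕ => ENNReal.ofReal (2 * Real.arctan (δ / e n)))
            Filter.atTop := h1.liminf_eq.symm
      _ ≤ Filter.liminf (fun n => g n t) Filter.atTop :=
          Filter.liminf_le_liminf (Filter.Eventually.of_forall hseq)
  -- conclusion
  calc ENNReal.ofReal π * μ U
      = ∫⁻ _ in U, ENNReal.ofReal π ∂μ := (setLIntegral_const U _).symm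
    _ ≤ ∫⁻ t in U, Filter.liminf (fun n => g n t) Filter.atTop ∂μ :=
        setLIntegral_mono (Measurable.liminf hgm) hlower
    _ ≤ ∫⁻ t, Filter.liminf (fun n => g n t) Filter.atTop ∂μ :=
        lintegral_mono' Measure.restrict_le_self le_rfl
    _ ≤ Filter.liminf (fun n => ∫⁻ t, g n t ∂μ) Filter.atTop := lintegral_liminf_le hgm
    _ ≤ Filter.liminf (fun _ : ℕ => ENNReal.ofReal M * volume U) Filter.atTop :=
        Filter.liminf_le_liminf (Filter.Eventually.of_forall hupper)
    _ = ENNReal.ofReal M * volume U := Filter.liminf_const _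

lemma ennreal_eq_zero_of_forall (x : ENNReal) (h : ∀ δ : ℝ, 0 < δ → x ≤ ENNReal.ofReal δ) :
    x = 0 := by
  by_contra hx
  have hfin : x ≤ ENNReal.ofReal 1 := h 1 one_pos
  have hfin' : x ≠ ⊤ := ne_top_of_le_ne_top ENNReal.ofReal_ne_top hfin
  have hpos : 0 < x.toReal := ENNReal.toReal_pos hx hfin'
  have := h (x.toReal / 2) (by linarith)
  have hlt : ENNReal.ofReal (x.toReal / 2) < x := by
    rw [ENNReal.ofReal_lt_iff_lt_toReal (by linarith) hfin']
    linarith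
  exact absurd this (not_le.mpr hlt)

lemma local_ac (μ : Measure ℝ) [IsProbabilityMeasure μ] (a b : ℝ) (ha : 0 ≤ a)
    (k : ℝ → ℝ) (hk_meas : Measurable k) (hk_nonneg : ∀ t, 0 ≤ k t)
    (hk_int : Integrable (fun t : ℝ => min 1 (t ^ 2) * k t / |t|))
    (hF : ∀ z : ℂ, 0 < z.im →
      Ftransform μ z = z - (b : ℂ) - (a : ℂ) / z +
        ∫ t : ℝ, (((t : ℂ) - z)⁻¹ - (t : ℂ) / (1 + (t : ℂ) ^ 2)) * ((|t| * k t : ℝ) : ℂ))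
    (x₀ c r : ℝ) (hc : 0 < c) (hr : 0 < r)
    (hnb : ∀ t ∈ Icc (x₀ - 2*r) (x₀ + 2*r), c ≤ |t| * k t) :
    ∀ s : Set ℝ, MeasurableSet s → volume s = 0 →
      μ (s ∩ Ioo (x₀ - r) (x₀ + r)) = 0 := by
  have harct : 0 < Real.arctan 1 := by
    rw [Real.arctan_one]; positivity
  set c₀ : ℝ := 2 * c * Real.arctan 1 with hc₀def
  have hc₀ : 0 < c₀ := by positivity
  -- Poisson bound on the interval
  have hpois : ∀ x ∈ Ioo (x₀ - r) (x₀ + r), ∀ ε : ℝ, 0 < ε → ε ≤ r →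
      ∫ t, ε / ((x - t)^2 + ε^2) ∂μ ≤ 1 / c₀ := by
    intro x hx ε hε hεr
    apply poisson_mu_le μ x ε hε c₀ hc₀
    have h1 := imF_ge μ a b ha k hk_meas hk_nonneg hk_int hF x ε hε
    have hIcc : Icc (x - r) (x + r) ⊆ Icc (x₀ - 2*r) (x₀ + 2*r) := by
      apply Icc_subset_Icc <;> [skip; skip] <;>
        · obtain ⟨hx1, hx2⟩ := hx; linarith
    have hint := levy_poisson_integrable k hk_meas hk_nonneg hk_int x ε hε
    have h2 : ∫ t in Icc (x - r) (x + r), ε / ((t - x)^2 + ε^2) * (|t| * k t)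
        ≤ ∫ t : ℝ, ε / ((t - x)^2 + ε^2) * (|t| * k t) := by
      apply setIntegral_le_integral hint
      filter_upwards with t
      have := hk_nonneg t
      positivity
    have h3 : ∫ t in Icc (x - r) (x + r), (ε / ((t - x)^2 + ε^2)) * c
        ≤ ∫ t in Icc (x - r) (x + r), ε / ((t - x)^2 + ε^2) * (|t| * k t) := by
      apply setIntegral_mono_on
      · exact (((poisson_cont x ε hε).mul continuous_const).integrableOn_Icc)
      · exact hint.integrableOn
      · exact measurableSet_Icc
      · intro t ht
        have := hnb t (hIcc ht)
        have hker : 0 ≤ ε / ((t - x)^2 + ε^2) := by positivity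
        exact mul_le_mul_of_nonneg_left this hker
    have h4 : ∫ t in Icc (x - r) (x + r), (ε / ((t - x)^2 + ε^2)) * c
        = (2 * Real.arctan (r / ε)) * c := by
      rw [MeasureTheory.integral_Icc_eq_integral_Ioc,
        ← intervalIntegral.integral_of_le (by linarith : x - r ≤ x + r)]
      rw [intervalIntegral.integral_mul_const, poisson_interval x ε hε]
      rw [add_sub_cancel_left, sub_sub_cancel_left, neg_div, Real.arctan_neg]
      ring
    have h5 : c₀ ≤ (2 * Real.arctan (r / ε)) * c := by
      rw [hc₀def]
      have : Real.arctan 1 ≤ Real.arctan (r / ε) := by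
        apply Real.arctan_strictMono.monotone
        rw [le_div_iff₀ hε]; linarith
      nlinarith
    linarith
  -- absolute continuity
  intro s hs hsnull
  apply ennreal_eq_zero_of_forall
  intro δ hδ
  set V : Set ℝ := Ioo (x₀ - r) (x₀ + r) with hV
  have h0 : volume (s ∩ V) = 0 := le_antisymm (le_trans (measure_mono inter_subset_left)
    (le_of_eq hsnull)) zero_le
  obtain ⟨U, hUsub, hUopen, hUvol⟩ := Set.exists_isOpen_lt_of_lt (s ∩ V)
    (ENNReal.ofReal (δ * c₀ * π)) (by
      rw [h0]; exact ENNReal.ofReal_pos.mpr (by positivity))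
  set U' : Set ℝ := U ∩ V with hU'
  have hU'open : IsOpen U' := hUopen.inter isOpen_Ioo
  have hkey := measure_open_le μ U' hU'open (1/c₀) r (by positivity) hr
    (fun x hx ε hε hεr => hpois x hx.2 ε hε hεr)
  -- extract the bound
  have hμ : μ (s ∩ V) ≤ μ U' := measure_mono (fun y hy => ⟨hUsub hy, hy.2⟩)
  have hπ : (0:ℝ) < π := Real.pi_pos
  have hvol : volume U' ≤ ENNReal.ofReal (δ * c₀ * π) :=
    le_trans (measure_mono inter_subset_left) (le_of_lt hUvol)
  have hchain : ENNReal.ofReal π * μ (s ∩ V) ≤ ENNReal.ofReal (δ * π) := by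
    calc ENNReal.ofReal π * μ (s ∩ V) ≤ ENNReal.ofReal π * μ U' := by
          exact mul_le_mul_right hμ _
      _ ≤ ENNReal.ofReal (1/c₀) * volume U' := hkey
      _ ≤ ENNReal.ofReal (1/c₀) * ENNReal.ofReal (δ * c₀ * π) := mul_le_mul_right hvol _
      _ = ENNReal.ofReal ((1/c₀) * (δ * c₀ * π)) := by
          rw [← ENNReal.ofReal_mul (by positivity)]
      _ = ENNReal.ofReal (δ * π) := by
          congr 1
          field_simp
    -- done
  -- divide by π
  have : μ (s ∩ V) ≤ ENNReal.ofReal δ := by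
    have hne : ENNReal.ofReal π ≠ 0 := by
      simp only [ne_eq, ENNReal.ofReal_eq_zero, not_le]; exact hπ
    have hnetop : ENNReal.ofReal π ≠ ⊤ := ENNReal.ofReal_ne_top
    rw [← ENNReal.mul_le_mul_iff_right hne hnetop]
    calc ENNReal.ofReal π * μ (s ∩ V) ≤ ENNReal.ofReal (δ * π) := hchain
      _ = ENNReal.ofReal π * ENNReal.ofReal δ := by
          rw [← ENNReal.ofReal_mul hπ.le]; congr 1; ring
  exact this

lemma atom_zero (μ : Measure ℝ) [IsProbabilityMeasure μ] (a b : ℝ) (ha : 0 ≤ a)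
    (k : ℝ → ℝ) (hk_meas : Measurable k) (hk_nonneg : ∀ t, 0 ≤ k t)
    (hk_int : Integrable (fun t : ℝ => min 1 (t ^ 2) * k t / |t|))
    (hF : ∀ z : ℂ, 0 < z.im →
      Ftransform μ z = z - (b : ℂ) - (a : ℂ) / z +
        ∫ t : ℝ, (((t : ℂ) - z)⁻¹ - (t : ℂ) / (1 + (t : ℂ) ^ 2)) * ((|t| * k t : ℝ) : ℂ))
    (v c : ℝ) (hv : 0 < v) (hc : 0 < c) (hkv : ∀ t ∈ Ioc (0:ℝ) v, c ≤ k t) :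
    μ {(0:ℝ)} = 0 := by
  -- enough to show toReal ≤ η for all positive η
  have key : ∀ η : ℝ, 0 < η → (μ {(0:ℝ)}).toReal ≤ η := by
    intro η hη
    set ε : ℝ := min (v/2) (v * Real.exp (-(2/c) * (1/η))) with hεdef
    have hε : 0 < ε := by
      apply lt_min (by linarith) (by positivity)
    have hεv : ε < v := lt_of_le_of_lt (min_le_left _ _) (by linarith)
    have hεexp : ε ≤ v * Real.exp (-(2/c) * (1/η)) := min_le_right _ _
    -- the k-integral I(ε)
    set I : ℝ := ∫ t : ℝ, |t| * k t / (t^2 + ε^2) with hIdef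
    have hIint : Integrable (fun t : ℝ => |t| * k t / (t^2 + ε^2)) := by
      have h := (levy_poisson_integrable k hk_meas hk_nonneg hk_int 0 ε hε).const_mul (ε⁻¹)
      apply h.congr
      filter_upwards with t
      rw [sub_zero]
      field_simp
    -- lower bound on I via logarithmic divergence
    have hlog : 1/η ≤ (c/2) * Real.log (v/ε) := by
      have hve : Real.exp ((2/c) * (1/η)) ≤ v / ε := by
        rw [le_div_iff₀ hε]
        calc Real.exp ((2/c) * (1/η)) * ε
            ≤ Real.exp ((2/c) * (1/η)) * (v * Real.exp (-(2/c) * (1/η))) := by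
              apply mul_le_mul_of_nonneg_left hεexp (Real.exp_pos _).le
          _ = v := by
              rw [show -(2/c) * (1/η) = -((2/c) * (1/η)) by ring, Real.exp_neg]
              field_simp
      have := Real.le_log_iff_exp_le (by positivity : (0:ℝ) < v / ε) |>.mpr hve
      calc 1/η = (c/2) * ((2/c) * (1/η)) := by field_simp
        _ ≤ (c/2) * Real.log (v/ε) := by
            apply mul_le_mul_of_nonneg_left this (by positivity)
    have hIlow : 1/η ≤ I := by
      have hsub : ∫ t in Icc ε v, c / (2*t) ≤ ∫ t in Icc ε v, |t| * k t / (t^2 + ε^2) := by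
        apply setIntegral_mono_on
        · apply ContinuousOn.integrableOn_Icc
          apply ContinuousOn.div continuousOn_const (by fun_prop)
          intro t ht
          have htpos : 0 < t := lt_of_lt_of_le hε ht.1
          positivity
        · exact hIint.integrableOn
        · exact measurableSet_Icc
        · intro t ht
          obtain ⟨ht1, ht2⟩ := ht
          have htpos : 0 < t := lt_of_lt_of_le hε ht1
          have habs : |t| = t := abs_of_pos htpos
          have hkt : c ≤ k t := hkv t ⟨htpos, ht2⟩
          rw [habs, div_le_div_iff₀ (by positivity) (by positivity)]
          have hε2 : ε^2 ≤ t^2 := by nlinarith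
          nlinarith [hε2, mul_le_mul_of_nonneg_right hkt
            (le_of_lt (by positivity : (0:ℝ) < 2*t^2))]
      have hval : ∫ t in Icc ε v, c / (2*t) = (c/2) * Real.log (v/ε) := by
        rw [MeasureTheory.integral_Icc_eq_integral_Ioc,
          ← intervalIntegral.integral_of_le hεv.le]
        have : (fun t : ℝ => c / (2*t)) = fun t : ℝ => (c/2) * (1/t) := by
          funext t; field_simp
        rw [this, intervalIntegral.integral_const_mul, integral_one_div]
        intro h
        rcases h with ⟨h1, h2⟩
        simp only [inf_le_iff] at h1
        rcases h1 with h1 | h1 <;> linarith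
      have hrest : ∫ t in Icc ε v, |t| * k t / (t^2 + ε^2) ≤ I := by
        apply setIntegral_le_integral hIint
        filter_upwards with t
        have := hk_nonneg t
        positivity
      calc 1/η ≤ (c/2) * Real.log (v/ε) := hlog
        _ = ∫ t in Icc ε v, c / (2*t) := hval.symm
        _ ≤ _ := hsub
        _ ≤ I := hrest
    -- lower bound on Im F at iε
    have hP : ∫ t : ℝ, ε / ((t - 0)^2 + ε^2) * (|t| * k t) = ε * I := by
      rw [hIdef, ← integral_const_mul]
      congr 1
      funext t
      rw [sub_zero]
      field_simp
    have himF := imF_ge μ a b ha k hk_meas hk_nonneg hk_int hF 0 ε hε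
    rw [hP] at himF
    have hc₀ : (0:ℝ) < ε * (1 + 1/η) := by positivity
    have hbound : ε * (1 + 1/η) ≤ (Ftransform μ ((0 : ℂ) + (ε : ℂ) * Complex.I)).im := by
      have : ε * (1 + 1/η) ≤ ε + ε * I := by
        have := mul_le_mul_of_nonneg_left hIlow hε.le
        nlinarith
      calc ε * (1 + 1/η) ≤ ε + ε * I := this
        _ ≤ _ := by
          have h0 : ((0:ℝ) : ℂ) = (0:ℂ) := by norm_num
          rw [← h0]
          exact himF
    have hpois := poisson_mu_le μ 0 ε hε _ hc₀ hbound
    -- atom bound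
    have hatom : (μ {(0:ℝ)}).toReal * (1/ε) ≤ ∫ t, ε / ((0 - t)^2 + ε^2) ∂μ := by
      have hind := integral_indicator_const (μ := μ) (1/ε : ℝ)
        (measurableSet_singleton (0:ℝ))
      rw [smul_eq_mul, MeasureTheory.measureReal_def] at hind
      rw [← hind]
      apply integral_mono _ (pois_mu_integrable μ 0 ε hε)
      · intro t
        by_cases ht : t ∈ ({(0:ℝ)} : Set ℝ)
        · simp only [mem_singleton_iff] at ht
          subst ht
          rw [Set.indicator_of_mem (mem_singleton _)]
          show (1:ℝ)/ε ≤ ε/((0 - (0:ℝ))^2 + ε^2)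
          have heq : ε / ((0 - (0:ℝ))^2 + ε^2) = 1/ε := by
            rw [show ((0:ℝ) - 0)^2 = 0 by ring, zero_add, sq,
              div_mul_cancel_left₀ hε.ne', one_div]
          exact le_of_eq heq.symm
        · rw [Set.indicator_of_notMem ht]
          positivity
      · exact (integrable_const _).indicator (measurableSet_singleton _)
    have final : (μ {(0:ℝ)}).toReal * (1/ε) ≤ 1 / (ε * (1 + 1/η)) :=
      le_trans hatom hpois
    -- conclude
    have hμfin : (μ {(0:ℝ)}).toReal ≤ 1 / (1 + 1/η) := by
      have h1 : (μ {(0:ℝ)}).toReal ≤ (1 / (ε * (1 + 1/η))) * ε := by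
        have := mul_le_mul_of_nonneg_right final hε.le
        calc (μ {(0:ℝ)}).toReal = (μ {(0:ℝ)}).toReal * (1/ε) * ε := by
              field_simp
          _ ≤ _ := this
      calc (μ {(0:ℝ)}).toReal ≤ (1 / (ε * (1 + 1/η))) * ε := h1
        _ = 1 / (1 + 1/η) := by field_simp
    calc (μ {(0:ℝ)}).toReal ≤ 1 / (1 + 1/η) := hμfin
      _ ≤ η := by
        rw [div_le_iff₀ (by positivity)]
        field_simp
        nlinarith
  -- finish
  have h0 : (μ {(0:ℝ)}).toReal = 0 := by
    by_contra h
    have hpos : 0 < (μ {(0:ℝ)}).toReal := lt_of_le_of_ne ENNReal.toReal_nonneg (Ne.symm h)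
    have := key ((μ {(0:ℝ)}).toReal / 2) (by linarith)
    linarith
  rw [ENNReal.toReal_eq_zero_iff] at h0
  rcases h0 with h0 | h0
  · exact h0
  · exact absurd h0 (measure_ne_top μ _)

/-- if `μ` is a probability measure on ℝ whose F-transform admits the
Pick–Nevanlinna representation with Gaussian component `a ≥ 0` and absolutely continuous
Boolean Lévy density data `k` unimodal with mode 0 and not a.e. zero, then with
`α = inf {x : k x ≠ 0}` and `β = sup {x : k x ≠ 0}` (as extended reals), the restriction
of `μ` to the open interval `(α, β)` is Lebesgue absolutely continuous. -/
theorem boolean_sd_restrict_ac (μ : Measure ℝ) [IsProbabilityMeasure μ]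
    (a b : ℝ) (ha : 0 ≤ a) (k : ℝ → ℝ) (hk_meas : Measurable k)
    (hk_nonneg : ∀ t, 0 ≤ k t)
    (hk_mono : MonotoneOn k (Set.Iio 0)) (hk_anti : AntitoneOn k (Set.Ioi 0))
    (hk_ne : ¬ (∀ᵐ t ∂(volume : Measure ℝ), k t = 0))
    (hk_int : Integrable (fun t : ℝ => min 1 (t ^ 2) * k t / |t|))
    (hF : ∀ z : ℂ, 0 < z.im →
      Ftransform μ z = z - (b : ℂ) - (a : ℂ) / z +
        ∫ t : ℝ, (((t : ℂ) - z)⁻¹ - (t : ℂ) / (1 + (t : ℂ) ^ 2)) * ((|t| * k t : ℝ) : ℂ)) :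
    μ.restrict {x : ℝ |
        sInf ((fun y : ℝ => (y : EReal)) '' {y : ℝ | k y ≠ 0}) < (x : EReal) ∧
        (x : EReal) < sSup ((fun y : ℝ => (y : EReal)) '' {y : ℝ | k y ≠ 0})}
      ≪ (volume : Measure ℝ) := by
  set img : Set EReal := (fun y : ℝ => (y : EReal)) '' {y : ℝ | k y ≠ 0} with himg
  set T : Set ℝ := {x : ℝ | sInf img < (x : EReal) ∧ (x : EReal) < sSup img} with hT
  -- helper: elements above / below
  have exists_right : ∀ x : ℝ, (x : EReal) < sSup img → ∃ v : ℝ, k v ≠ 0 ∧ x < v := by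
    intro x hx
    obtain ⟨e, he, hlt⟩ := lt_sSup_iff.mp hx
    obtain ⟨v, hv, rfl⟩ := he
    exact ⟨v, hv, EReal.coe_lt_coe_iff.mp hlt⟩
  have exists_left : ∀ x : ℝ, sInf img < (x : EReal) → ∃ u : ℝ, k u ≠ 0 ∧ u < x := by
    intro x hx
    obtain ⟨e, he, hlt⟩ := sInf_lt_iff.mp hx
    obtain ⟨u, hu, rfl⟩ := he
    exact ⟨u, hu, EReal.coe_lt_coe_iff.mp hlt⟩
  -- neighborhood bound at nonzero points of T
  have hnbhd : ∀ x₀ ∈ T, x₀ ≠ 0 → ∃ c r : ℝ, 0 < c ∧ 0 < r ∧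
      ∀ t ∈ Icc (x₀ - 2*r) (x₀ + 2*r), c ≤ |t| * k t := by
    intro x₀ hx₀ hx₀ne
    rcases lt_or_gt_of_ne hx₀ne with hneg | hpos
    · -- x₀ < 0
      obtain ⟨u, hku, hu⟩ := exists_left x₀ hx₀.1
      have hku' : 0 < k u := lt_of_le_of_ne (hk_nonneg u) (Ne.symm hku)
      have hu0 : u < 0 := lt_trans hu hneg
      refine ⟨(-x₀/2) * k u, min (-x₀/4) ((x₀ - u)/4),
        mul_pos (by linarith) hku', lt_min (by linarith) (by linarith), ?_⟩
      intro t ht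
      set r := min (-x₀/4) ((x₀ - u)/4) with hr
      have hr1 : r ≤ -x₀/4 := min_le_left _ _
      have hr2 : r ≤ (x₀ - u)/4 := min_le_right _ _
      obtain ⟨ht1, ht2⟩ := ht
      have htneg : t ≤ x₀/2 := by linarith
      have htneg' : t < 0 := by linarith
      have htu : u < t := by linarith
      have hkt : k u ≤ k t := hk_mono hu0 htneg' htu.le
      have habs : -x₀/2 ≤ |t| := by
        rw [abs_of_neg htneg']; linarith
      calc (-x₀/2) * k u ≤ |t| * k u := mul_le_mul_of_nonneg_right habs hku'.le
        _ ≤ |t| * k t := mul_le_mul_of_nonneg_left hkt (abs_nonneg t)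
    · -- 0 < x₀
      obtain ⟨v, hkv, hv⟩ := exists_right x₀ hx₀.2
      have hkv' : 0 < k v := lt_of_le_of_ne (hk_nonneg v) (Ne.symm hkv)
      have hv0 : 0 < v := lt_trans hpos hv
      refine ⟨(x₀/2) * k v, min (x₀/4) ((v - x₀)/4),
        mul_pos (by linarith) hkv', lt_min (by linarith) (by linarith), ?_⟩
      intro t ht
      set r := min (x₀/4) ((v - x₀)/4) with hr
      have hr1 : r ≤ x₀/4 := min_le_left _ _
      have hr2 : r ≤ (v - x₀)/4 := min_le_right _ _
      obtain ⟨ht1, ht2⟩ := ht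
      have htpos : x₀/2 ≤ t := by linarith
      have htpos' : 0 < t := by linarith
      have htv : t < v := by linarith
      have hkt : k v ≤ k t := hk_anti htpos' hv0 htv.le
      have habs : x₀/2 ≤ |t| := by rw [abs_of_pos htpos']; linarith
      calc (x₀/2) * k v ≤ |t| * k v := mul_le_mul_of_nonneg_right habs hkv'.le
        _ ≤ |t| * k t := mul_le_mul_of_nonneg_left hkt (abs_nonneg t)
  -- T is measurable
  have hTmeas : MeasurableSet T := by
    have : T = (fun x : ℝ => (x : EReal)) ⁻¹' (Set.Ioo (sInf img) (sSup img)) := rfl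
    rw [this]
    exact measurable_coe_real_ereal measurableSet_Ioo
  -- property of rational intervals
  set P : ℚ × ℚ → Prop := fun pq => ∀ s : Set ℝ, MeasurableSet s → volume s = 0 →
    μ (s ∩ Ioo (pq.1 : ℝ) (pq.2 : ℝ)) = 0 with hP
  -- cover
  have hcover : ∀ x ∈ T, x ≠ 0 → ∃ pq : ℚ × ℚ, P pq ∧ x ∈ Ioo (pq.1 : ℝ) (pq.2 : ℝ) := by
    intro x hx hxne
    obtain ⟨c, r, hc, hrr, hnb⟩ := hnbhd x hx hxne
    obtain ⟨p, hp1, hp2⟩ := exists_rat_btwn (show x - r < x by linarith)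
    obtain ⟨q, hq1, hq2⟩ := exists_rat_btwn (show x < x + r by linarith)
    refine ⟨(p, q), ?_, ⟨hp2, hq1⟩⟩
    intro s hs hsnull
    have hsub : Ioo (p : ℝ) (q : ℝ) ⊆ Ioo (x - r) (x + r) :=
      Ioo_subset_Ioo hp1.le hq2.le
    have := local_ac μ a b ha k hk_meas hk_nonneg hk_int hF x c r hc hrr hnb s hs hsnull
    exact le_antisymm (le_trans (measure_mono (inter_subset_inter_right s hsub)) this.le)
      zero_le
  -- conclude
  apply Measure.AbsolutelyContinuous.mk
  intro s hs hsnull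
  rw [Measure.restrict_apply hs]
  -- split off zero
  have hzero : μ (s ∩ T ∩ {(0:ℝ)}) = 0 := by
    by_cases h0 : (0:ℝ) ∈ T
    · obtain ⟨v, hkv, hv⟩ := exists_right 0 h0.2
      have hkv' : 0 < k v := lt_of_le_of_ne (hk_nonneg v) (Ne.symm hkv)
      have hμ0 := atom_zero μ a b ha k hk_meas hk_nonneg hk_int hF v (k v) hv hkv'
        (fun t ht => hk_anti ht.1 hv ht.2)
      exact le_antisymm (le_trans (measure_mono inter_subset_right) hμ0.le) zero_le
    · have : s ∩ T ∩ {(0:ℝ)} = ∅ := by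
        ext y
        simp only [mem_inter_iff, mem_singleton_iff, mem_empty_iff_false, iff_false]
        rintro ⟨⟨-, hyT⟩, rfl⟩
        exact h0 hyT
      rw [this, measure_empty]
  have hB : μ (⋃ pq ∈ {pq : ℚ × ℚ | P pq}, (s ∩ Ioo (pq.1 : ℝ) (pq.2 : ℝ))) = 0 := by
    rw [measure_biUnion_null_iff (Set.to_countable _)]
    intro pq hpq
    exact hpq s hs hsnull
  have hsubset : s ∩ T ⊆ (s ∩ T ∩ {(0:ℝ)}) ∪
      (⋃ pq ∈ {pq : ℚ × ℚ | P pq}, (s ∩ Ioo (pq.1 : ℝ) (pq.2 : ℝ))) := by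
    intro y hy
    by_cases hy0 : y = 0
    · exact Or.inl ⟨hy, hy0⟩
    · obtain ⟨pq, hpq, hypq⟩ := hcover y hy.2 hy0
      exact Or.inr (Set.mem_biUnion hpq ⟨hy.1, hypq⟩)
  apply le_antisymm _ zero_le
  calc μ (s ∩ T) ≤ μ ((s ∩ T ∩ {(0:ℝ)}) ∪
        (⋃ pq ∈ {pq : ℚ × ℚ | P pq}, (s ∩ Ioo (pq.1 : ℝ) (pq.2 : ℝ)))) :=
        measure_mono hsubset
    _ ≤ μ (s ∩ T ∩ {(0:ℝ)}) +
        μ (⋃ pq ∈ {pq : ℚ × ℚ | P pq}, (s ∩ Ioo (pq.1 : ℝ) (pq.2 : ℝ))) :=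
        measure_union_le _ _
    _ ≤ 0 := by rw [hzero, hB, add_zero]
end

section
/- Let μ be a probability measure on ℝ. Suppose there exist a ≥ 0, b ∈ ℝ and a measurable function k : ℝ → [0,∞) that is nondecreasing on (−∞,0), nonincreasing on (0,∞), not Lebesgue-almost-everywhere zero, satisfies ∫_ℝ min(1,t²)·k(t)/|t| dt < ∞, and such that F_μ(z) = z − b − a/z + ∫_ℝ (1/(t−z) − t/(1+t²))·|t|·k(t) dt for all z ∈ ℂ⁺. Then μ({0}) = 0. -/
open MeasureTheory Complex Set

lemma aux_log_lower (κ : ℝ → ℝ) (hκ0 : ∀ t, 0 ≤ κ t) {ε c y : ℝ}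
    (hε : 0 < ε) (hy : 0 < y) (hyc : y < c)
    (hκε : ∀ t ∈ Set.Ioc (0:ℝ) c, ε ≤ κ t)
    (hint : Integrable (fun t => y / (t ^ 2 + y ^ 2) * (|t| * κ t))) :
    y * ε / 2 * (Real.log c - Real.log y) ≤ ∫ t, y / (t ^ 2 + y ^ 2) * (|t| * κ t) := by
  have hc : 0 < c := hy.trans hyc
  set g : ℝ → ℝ := fun t => y / (t ^ 2 + y ^ 2) * (|t| * κ t) with hg
  have hgnn : ∀ t, 0 ≤ g t := fun t =>
    mul_nonneg (div_nonneg hy.le (by positivity)) (mul_nonneg (abs_nonneg _) (hκ0 t))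
  have hI : IntegrableOn (fun t : ℝ => y * ε / 2 * t⁻¹) (Set.Ioc y c) := by
    apply IntegrableOn.mono_set (t := Set.Icc y c) ?_ Set.Ioc_subset_Icc_self
    apply ContinuousOn.integrableOn_Icc
    apply ContinuousOn.mul continuousOn_const
    exact ContinuousOn.inv₀ continuousOn_id fun x hx => ne_of_gt (lt_of_lt_of_le hy hx.1)
  have h1 : ∫ t in Set.Ioc y c, y * ε / 2 * t⁻¹ ≤ ∫ t in Set.Ioc y c, g t := by
    apply setIntegral_mono_on hI hint.integrableOn measurableSet_Ioc
    intro t ht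
    have ht0 : 0 < t := hy.trans ht.1
    have hκt : ε ≤ κ t := hκε t ⟨ht0, ht.2⟩
    have h2t : t ^ 2 + y ^ 2 ≤ 2 * t ^ 2 := by nlinarith [ht.1]
    have key : y * ε / 2 * t⁻¹ = y / (2 * t ^ 2) * (t * ε) := by
      field_simp
    rw [key, hg]
    simp only [abs_of_pos ht0]
    gcongr
  have h2 : ∫ t in Set.Ioc y c, g t ≤ ∫ t, g t :=
    setIntegral_le_integral hint (Filter.Eventually.of_forall hgnn)
  have h3 : ∫ t in Set.Ioc y c, y * ε / 2 * t⁻¹ = y * ε / 2 * (Real.log c - Real.log y) := by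
    rw [← intervalIntegral.integral_of_le hyc.le, intervalIntegral.integral_const_mul,
      integral_inv_of_pos hy hc, Real.log_div hc.ne' hy.ne']
  linarith

lemma aux_intf (k : ℝ → ℝ) (hk_meas : Measurable k) (hk_nonneg : ∀ t, 0 ≤ k t)
    (hk_int : Integrable (fun t : ℝ => min 1 (t ^ 2) * k t / |t|)) {y : ℝ} (hy : 0 < y) :
    Integrable (fun t : ℝ =>
      (((t : ℂ) - (y:ℂ)*I)⁻¹ - (t : ℂ) / (1 + (t : ℂ) ^ 2)) * ((|t| * k t : ℝ) : ℂ)) := by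
  set z : ℂ := (y:ℂ)*I with hzdef
  have hzim : z.im = y := by simp [hzdef]
  have hzre : z.re = 0 := by simp [hzdef]
  apply Integrable.mono' (hk_int.const_mul (2 + y⁻¹ + y))
  · apply Measurable.aestronglyMeasurable
    apply Measurable.mul
    · apply Measurable.sub
      · exact (Complex.measurable_ofReal.sub measurable_const).inv
      · exact Complex.measurable_ofReal.div
          (measurable_const.add (Complex.measurable_ofReal.pow_const 2))
    · exact Complex.measurable_ofReal.comp (measurable_abs.mul hk_meas)
  · refine Filter.Eventually.of_forall fun t => ?_
    by_cases ht : t = 0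
    · subst ht; simp
    · have htpos : 0 < |t| := abs_pos.mpr ht
      have habs : ‖((|t| * k t : ℝ) : ℂ)‖ = |t| * k t := by
        rw [Complex.norm_real, Real.norm_eq_abs, _root_.abs_of_nonneg (mul_nonneg (abs_nonneg t) (hk_nonneg t))]
      rw [norm_mul, habs]
      have hdenim : y ≤ ‖(t:ℂ) - z‖ := by
        have h1 : |((t:ℂ) - z).im| ≤ ‖(t:ℂ) - z‖ := Complex.abs_im_le_norm _
        simpa [hzim, abs_of_pos hy] using h1
      have hdenre : |t| ≤ ‖(t:ℂ) - z‖ := by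
        have h1 : |((t:ℂ) - z).re| ≤ ‖(t:ℂ) - z‖ := Complex.abs_re_le_norm _
        simpa [hzre] using h1
      suffices hB : ‖((t:ℂ) - z)⁻¹ - (t:ℂ)/(1+(t:ℂ)^2)‖ ≤ (2 + y⁻¹ + y) * (min 1 (t^2) / t^2) by
        calc ‖((t:ℂ) - z)⁻¹ - (t:ℂ)/(1+(t:ℂ)^2)‖ * (|t| * k t)
            ≤ ((2 + y⁻¹ + y) * (min 1 (t^2) / t^2)) * (|t| * k t) := by
              apply mul_le_mul_of_nonneg_right hB (mul_nonneg (abs_nonneg t) (hk_nonneg t))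
          _ = (2 + y⁻¹ + y) * (min 1 (t^2) * k t / |t|) := by
              have hsq : t^2 = |t| * |t| := by rw [← _root_.sq_abs t]; ring
              rw [hsq]; field_simp
      rcases le_or_gt |t| 1 with h1 | h1
      · have ht2 : t^2 ≤ 1 := by rw [← _root_.sq_abs t]; nlinarith [htpos.le]
        rw [min_eq_right ht2, div_self (pow_ne_zero 2 ht), mul_one]
        have hb1 : ‖((t:ℂ) - z)⁻¹‖ ≤ y⁻¹ := by
          rw [norm_inv]
          exact inv_anti₀ hy hdenim
        have hb2 : ‖(t:ℂ)/(1+(t:ℂ)^2)‖ ≤ 1 := by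
          have hcast : (t:ℂ)/(1+(t:ℂ)^2) = (((t/(1+t^2)) : ℝ) : ℂ) := by push_cast; ring
          rw [hcast, Complex.norm_real, Real.norm_eq_abs, abs_div, abs_of_pos (by positivity : (0:ℝ) < 1+t^2)]
          apply div_le_one_of_le₀ (by nlinarith) (by positivity)
        calc ‖((t:ℂ) - z)⁻¹ - (t:ℂ)/(1+(t:ℂ)^2)‖
            ≤ ‖((t:ℂ) - z)⁻¹‖ + ‖(t:ℂ)/(1+(t:ℂ)^2)‖ := norm_sub_le _ _
          _ ≤ 2 + y⁻¹ + y := by linarith [hy.le]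
      · have ht2 : (1:ℝ) ≤ t^2 := by rw [← _root_.sq_abs t]; nlinarith
        rw [min_eq_left ht2]
        have hne2 : (1 + (t:ℂ)^2) ≠ 0 := by
          rw [show (1+(t:ℂ)^2) = (((1+t^2):ℝ):ℂ) by push_cast; ring]
          exact_mod_cast (by positivity : (0:ℝ) < 1+t^2).ne'
        have hnez : (t:ℂ) - z ≠ 0 := by
          intro h
          have := congrArg Complex.im h
          simp [hzim] at this
          linarith
        have hid : ((t:ℂ) - z)⁻¹ - (t:ℂ)/(1+(t:ℂ)^2)
            = (1 + (t:ℂ)*z) / (((t:ℂ) - z) * (1 + (t:ℂ)^2)) := by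
          field_simp
          ring
        rw [hid, norm_div, norm_mul]
        have hnum : ‖1 + (t:ℂ)*z‖ ≤ 1 + |t| * y := by
          calc ‖1 + (t:ℂ)*z‖ ≤ ‖(1:ℂ)‖ + ‖(t:ℂ)*z‖ := norm_add_le _ _
            _ = 1 + |t| * y := by
                have hznorm : ‖z‖ = y := by
                  rw [hzdef, norm_mul, Complex.norm_I, mul_one, Complex.norm_real,
                    Real.norm_eq_abs, abs_of_pos hy]
                rw [norm_one, norm_mul, hznorm, Complex.norm_real, Real.norm_eq_abs]
        have hd2 : ‖(1+(t:ℂ)^2)‖ = 1 + t^2 := by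
          rw [show (1+(t:ℂ)^2) = (((1+t^2):ℝ):ℂ) by push_cast; ring, Complex.norm_real,
            Real.norm_eq_abs, abs_of_pos (by positivity : (0:ℝ) < 1+t^2)]
        calc ‖1+(t:ℂ)*z‖ / (‖(t:ℂ)-z‖ * ‖1+(t:ℂ)^2‖)
            ≤ (1+|t| * y) / (|t| * (1+t^2)) := by
              rw [hd2]
              gcongr
          _ ≤ (2+y⁻¹+y) * (1 / t^2) := by
              rw [mul_one_div, div_le_div_iff₀ (by positivity) (by positivity)]
              rw [← _root_.sq_abs t]
              nlinarith [htpos, hy, mul_pos hy htpos,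
                mul_nonneg (sq_nonneg |t|) (sub_nonneg.mpr h1.le),
                mul_nonneg (inv_pos.mpr hy).le htpos.le,
                mul_nonneg (mul_nonneg (inv_pos.mpr hy).le htpos.le) (sq_nonneg |t|),
                mul_nonneg (mul_nonneg hy.le htpos.le) (sq_nonneg |t|)]

lemma key_bound (μ : Measure ℝ) [IsProbabilityMeasure μ]
    (a b : ℝ) (ha : 0 ≤ a) (k : ℝ → ℝ) (hk_meas : Measurable k)
    (hk_nonneg : ∀ t, 0 ≤ k t)
    (hk_int : Integrable (fun t : ℝ => min 1 (t ^ 2) * k t / |t|))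
    (hF : ∀ z : ℂ, 0 < z.im →
      Ftransform μ z = z - (b : ℂ) - (a : ℂ) / z +
        ∫ t : ℝ, (((t : ℂ) - z)⁻¹ - (t : ℂ) / (1 + (t : ℂ) ^ 2)) * ((|t| * k t : ℝ) : ℂ))
    (ε c : ℝ) (hε : 0 < ε) (hc : 0 < c)
    (hkc : ∀ t ∈ Set.Ioc (0:ℝ) c, ε ≤ k t + k (-t))
    (y : ℝ) (hy : 0 < y) (hyc : y < c) :
    (μ {(0:ℝ)}).toReal ≤ 4 / (ε * (Real.log c - Real.log y)) := by
  have hy2 : (0:ℝ) < y^2 := by positivity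
  set z : ℂ := (y:ℂ) * I with hzdef
  have hzim : z.im = y := by simp [hzdef]
  have hzre : z.re = 0 := by simp [hzdef]
  have hzpos : 0 < z.im := by rw [hzim]; exact hy
  set L : ℝ := Real.log c - Real.log y with hL
  have hLpos : 0 < L := sub_pos.2 (Real.log_lt_log hy hyc)
  -- the complex integrand and its integrability
  set f : ℝ → ℂ := fun t =>
    (((t : ℂ) - z)⁻¹ - (t : ℂ) / (1 + (t : ℂ) ^ 2)) * ((|t| * k t : ℝ) : ℂ) with hfdef
  have hfi : Integrable f := aux_intf k hk_meas hk_nonneg hk_int hy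
  -- pointwise imaginary part
  set g : ℝ → ℝ := fun t => y / (t ^ 2 + y ^ 2) * (|t| * k t) with hgdef
  have hIm_f : ∀ t, (f t).im = g t := by
    intro t
    have hcast : (t:ℂ)/(1+(t:ℂ)^2) = (((t/(1+t^2)) : ℝ) : ℂ) := by push_cast; ring
    have h2 : ((t:ℂ) - z).im = -y := by simp [hzdef]
    have h3 : Complex.normSq ((t:ℂ) - z) = t^2 + y^2 := by
      simp [Complex.normSq_apply, hzdef]; ring
    rw [hfdef]
    simp only [hcast, Complex.mul_im, Complex.sub_im, Complex.inv_im, h2, h3,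
      Complex.ofReal_im, Complex.ofReal_re, hgdef]
    ring
  have hgi : Integrable g := by
    have h := hfi.im
    simp only [RCLike.im_to_complex] at h
    exact h.congr (Filter.Eventually.of_forall hIm_f)
  have hIm_int : (∫ t, f t).im = ∫ t, g t := by
    have h := integral_im hfi
    simp only [RCLike.im_to_complex] at h
    rw [← h]
    exact integral_congr_ae (Filter.Eventually.of_forall hIm_f)
  -- imaginary part of the F-transform
  have hImF : (Ftransform μ z).im = y + a/y + ∫ t, g t := by
    rw [hF z hzpos]
    rw [Complex.add_im, hIm_int]
    have : (z - (b:ℂ) - (a:ℂ)/z).im = y + a/y := by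
      simp only [Complex.sub_im, Complex.ofReal_im, Complex.div_im, Complex.ofReal_re,
        hzim, hzre, Complex.normSq_apply]
      field_simp
      ring
    rw [this]
  -- lower bound for ∫ g
  have hglb : y * ε / 4 * L ≤ ∫ t, g t := by
    have hgneg : Integrable (fun t => g (-t)) := hgi.comp_neg
    have hsum : (fun t => y / (t ^ 2 + y ^ 2) * (|t| * (k t + k (-t))))
        = fun t => g t + g (-t) := by
      funext t
      simp only [hgdef, neg_neg, abs_neg, neg_sq]
      ring
    have hint2 : Integrable (fun t => y / (t ^ 2 + y ^ 2) * (|t| * (k t + k (-t)))) := by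
      rw [hsum]; exact hgi.add hgneg
    have h1 := aux_log_lower (fun t => k t + k (-t))
      (fun t => add_nonneg (hk_nonneg t) (hk_nonneg (-t))) hε hy hyc hkc hint2
    have h2 : ∫ t, y / (t ^ 2 + y ^ 2) * (|t| * (k t + k (-t))) = 2 * ∫ t, g t := by
      rw [hsum, integral_add hgi hgneg, integral_neg_eq_self g volume]
      ring
    rw [h2] at h1
    linarith
  have hgpos : 0 < ∫ t, g t := lt_of_lt_of_le (by positivity) hglb
  have hImFpos : 0 < (Ftransform μ z).im := by
    rw [hImF]; positivity
  -- Cauchy transform bounds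
  have hGint : Integrable (fun x : ℝ => (z - (x:ℂ))⁻¹) μ := by
    apply Integrable.mono' (integrable_const y⁻¹)
    · exact ((measurable_const.sub Complex.measurable_ofReal).inv).aestronglyMeasurable
    · refine Filter.Eventually.of_forall fun x => ?_
      rw [norm_inv]
      apply inv_anti₀ hy
      have h1 : |(z - (x:ℂ)).im| ≤ ‖z - (x:ℂ)‖ := Complex.abs_im_le_norm _
      simpa [hzim, abs_of_pos hy] using h1
  have hGim : -(cauchyTransform μ z).im = ∫ x, y / (x^2 + y^2) ∂μ := by
    rw [show cauchyTransform μ z = ∫ x, (z - (x:ℂ))⁻¹ ∂μ from rfl]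
    have h := integral_im hGint
    simp only [RCLike.im_to_complex] at h
    rw [← h, ← integral_neg]
    apply integral_congr_ae
    refine Filter.Eventually.of_forall fun x => ?_
    have h2 : (z - (x:ℂ)).im = y := by simp [hzim]
    have h3 : Complex.normSq (z - (x:ℂ)) = x^2 + y^2 := by
      simp [Complex.normSq_apply, hzdef]; ring
    simp only [Complex.inv_im, h2, h3]
    ring
  have hPint : Integrable (fun x : ℝ => y / (x^2 + y^2)) μ := by
    have h := hGint.im
    simp only [RCLike.im_to_complex] at h
    have h2 := h.neg
    apply h2.congr
    refine Filter.Eventually.of_forall fun x => ?_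
    have h2' : (z - (x:ℂ)).im = y := by simp [hzim]
    have h3 : Complex.normSq (z - (x:ℂ)) = x^2 + y^2 := by
      simp [Complex.normSq_apply, hzdef]; ring
    simp only [Pi.neg_apply]
    rw [Complex.inv_im, h2', h3]
    ring
  have hPlb : (μ {(0:ℝ)}).toReal * y⁻¹ ≤ ∫ x, y / (x^2 + y^2) ∂μ := by
    have hind : ∫ x, ({(0:ℝ)} : Set ℝ).indicator (fun _ => y⁻¹) x ∂μ
        = (μ {(0:ℝ)}).toReal * y⁻¹ := by
      rw [integral_indicator_const (y⁻¹) (measurableSet_singleton (0:ℝ))]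
      simp [smul_eq_mul, measureReal_def]
    rw [← hind]
    apply integral_mono ((integrable_const y⁻¹).indicator (measurableSet_singleton (0:ℝ))) hPint
    intro x
    by_cases hx : x = (0:ℝ)
    · subst hx
      simp only [Set.indicator_of_mem (Set.mem_singleton (0:ℝ))]
      rw [show (0:ℝ)^2 + y^2 = y^2 by ring]
      refine le_of_eq ?_
      rw [sq]
      field_simp
    · rw [Set.indicator_of_notMem (by simpa using hx)]
      positivity
  -- assemble the chain
  have hnegim : -(cauchyTransform μ z).im ≤ ‖cauchyTransform μ z‖ := by
    have h1 := Complex.abs_im_le_norm (cauchyTransform μ z)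
    cases' abs_le.mp h1 with h2 h3
    linarith
  have hFnorm : ‖cauchyTransform μ z‖ = ‖Ftransform μ z‖⁻¹ := by
    rw [show Ftransform μ z = (cauchyTransform μ z)⁻¹ from rfl, norm_inv, inv_inv]
  have hIm_le_norm : (Ftransform μ z).im ≤ ‖Ftransform μ z‖ := by
    have h1 := Complex.abs_im_le_norm (Ftransform μ z)
    exact le_trans (le_abs_self _) h1
  have hchain : (μ {(0:ℝ)}).toReal * y⁻¹ ≤ (y * ε / 4 * L)⁻¹ := by
    calc (μ {(0:ℝ)}).toReal * y⁻¹ ≤ ∫ x, y / (x^2 + y^2) ∂μ := hPlb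
      _ = -(cauchyTransform μ z).im := hGim.symm
      _ ≤ ‖cauchyTransform μ z‖ := hnegim
      _ = ‖Ftransform μ z‖⁻¹ := hFnorm
      _ ≤ ((Ftransform μ z).im)⁻¹ := by
          apply inv_anti₀ hImFpos hIm_le_norm
      _ ≤ (∫ t, g t)⁻¹ := by
          apply inv_anti₀ hgpos
          rw [hImF]
          have : 0 ≤ a / y := by positivity
          linarith
      _ ≤ (y * ε / 4 * L)⁻¹ := by
          apply inv_anti₀ (by positivity) hglb
  have hfinal : (μ {(0:ℝ)}).toReal ≤ (y * ε / 4 * L)⁻¹ * y := by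
    calc (μ {(0:ℝ)}).toReal = (μ {(0:ℝ)}).toReal * y⁻¹ * y := by
          field_simp
      _ ≤ (y * ε / 4 * L)⁻¹ * y := by
          apply mul_le_mul_of_nonneg_right hchain hy.le
  calc (μ {(0:ℝ)}).toReal ≤ (y * ε / 4 * L)⁻¹ * y := hfinal
    _ = 4 / (ε * L) := by field_simp

/-- a Boolean selfdecomposable probability measure `μ` (given by its
Pick–Nevanlinna representation with data `a, b, k`, where `k` is unimodal with mode 0
and not a.e. zero) has no atom at `0`. -/
theorem boolean_sd_no_atom_at_zero (μ : Measure ℝ) [IsProbabilityMeasure μ]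
    (a b : ℝ) (ha : 0 ≤ a) (k : ℝ → ℝ) (hk_meas : Measurable k)
    (hk_nonneg : ∀ t, 0 ≤ k t)
    (hk_mono : MonotoneOn k (Set.Iio 0)) (hk_anti : AntitoneOn k (Set.Ioi 0))
    (hk_ne : ¬ (∀ᵐ t ∂(volume : Measure ℝ), k t = 0))
    (hk_int : Integrable (fun t : ℝ => min 1 (t ^ 2) * k t / |t|))
    (hF : ∀ z : ℂ, 0 < z.im →
      Ftransform μ z = z - (b : ℂ) - (a : ℂ) / z +
        ∫ t : ℝ, (((t : ℂ) - z)⁻¹ - (t : ℂ) / (1 + (t : ℂ) ^ 2)) * ((|t| * k t : ℝ) : ℂ)) :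
    μ {(0 : ℝ)} = 0 := by
  -- Step 1: find ε, c
  obtain ⟨ε, hε, c, hc, hkc⟩ :
      ∃ ε > (0:ℝ), ∃ c > (0:ℝ), ∀ t ∈ Set.Ioc (0:ℝ) c, ε ≤ k t + k (-t) := by
    have h1 : (volume {t : ℝ | ¬ k t = 0}) ≠ 0 := fun h => hk_ne (ae_iff.mpr h)
    have h2 : (volume ({t : ℝ | ¬ k t = 0} \ {0})) ≠ 0 := by
      rwa [measure_diff_null (measure_singleton 0)]
    obtain ⟨t₀, ht₀⟩ := nonempty_of_measure_ne_zero h2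
    have hkt₀ : 0 < k t₀ := lt_of_le_of_ne (hk_nonneg t₀) (Ne.symm ht₀.1)
    have ht₀0 : t₀ ≠ 0 := ht₀.2
    refine ⟨k t₀, hkt₀, |t₀|, abs_pos.mpr ht₀0, fun t ht => ?_⟩
    rcases ht₀0.lt_or_gt with h | h
    · have : k t₀ ≤ k (-t) := by
        apply hk_mono h (show -t ∈ Set.Iio (0:ℝ) from neg_neg_iff_pos.mpr ht.1)
        rw [abs_of_neg h] at ht
        linarith [ht.2]
      linarith [hk_nonneg t]
    · have : k t₀ ≤ k t := by
        apply hk_anti ht.1 (Set.mem_Ioi.mpr h)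
        rw [abs_of_pos h] at ht
        exact ht.2
      linarith [hk_nonneg (-t)]
  -- Step 2: key bound
  have key : ∀ y : ℝ, 0 < y → y < c →
      (μ {(0:ℝ)}).toReal ≤ 4 / (ε * (Real.log c - Real.log y)) := fun y hy hyc =>
    key_bound μ a b ha k hk_meas hk_nonneg hk_int hF ε c hε hc hkc y hy hyc
  -- Step 3: conclude
  have h0 : ∀ δ : ℝ, 0 < δ → (μ {(0:ℝ)}).toReal ≤ δ := by
    intro δ hδ
    set y : ℝ := c * Real.exp (-(4 / (ε * δ))) with hy
    have hy0 : 0 < y := by positivity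
    have hyc : y < c := by
      rw [hy]
      nlinarith [Real.exp_lt_one_iff.mpr (show -(4/(ε*δ)) < 0 by simp; positivity), hc,
        Real.exp_pos (-(4/(ε*δ)))]
    have hlog : Real.log c - Real.log y = 4 / (ε * δ) := by
      rw [hy, Real.log_mul hc.ne' (Real.exp_pos _).ne', Real.log_exp]; ring
    have := key y hy0 hyc
    rw [hlog] at this
    calc (μ {(0:ℝ)}).toReal ≤ 4 / (ε * (4 / (ε * δ))) := this
      _ = δ := by field_simp
  have hle : (μ {(0:ℝ)}).toReal ≤ 0 := by
    refine le_of_forall_pos_le_add fun δ hδ => ?_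
    simpa using h0 δ hδ
  have := le_antisymm hle ENNReal.toReal_nonneg
  rcases (ENNReal.toReal_eq_zero_iff _).mp this with h | h
  · exact h
  · exact absurd h (measure_ne_top μ _)
end

section
/- Let μ be a probability measure on ℝ, b ∈ ℝ and τ a finite positive Borel measure on ℝ such that F_μ(z) = z − b − ∫_ℝ (1+tz)/(z−t) dτ(t) for all z ∈ ℂ⁺. Suppose there exists an at most countable subset C of ℝ such that: (1) 0 ∈ C; (2) for every x ∈ ℝ∖C the limit lim_{ε→0⁺} Im[F_μ(x+iε)] exists and belongs to [0,∞); (3) for every x ∈ C∖{0}, lim_{ε→0⁺} ε·F_μ(x+iε) = 0. Then the restriction of τ to ℝ∖{0} is absolutely continuous with respect to Lebesgue measure; equivalently, the Boolean Lévy measure ν(dt) = ((1+t²)/t²)·1_{t≠0}(t) τ(dt) of μ is Lebesgue absolutely continuous. -/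
open MeasureTheory Complex Set Filter

lemma aux_ne (z : ℂ) (hz : 0 < z.im) (t : ℝ) : z - (t:ℂ) ≠ 0 := by
  intro h
  have : (z - (t:ℂ)).im = 0 := by rw [h]; simp
  simp at this
  exact hz.ne' this

lemma aux_integrable (τ : Measure ℝ) [IsFiniteMeasure τ] (z : ℂ) (hz : 0 < z.im) :
    Integrable (fun t : ℝ => (1 + (t:ℂ) * z) / (z - (t:ℂ))) τ := by
  have hne := aux_ne z hz
  have hcont : Continuous fun t : ℝ => (1 + (t:ℂ) * z) / (z - (t:ℂ)) := by
    apply Continuous.div (by continuity) (by continuity) hne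
  have heq : (fun t : ℝ => (1 + (t:ℂ) * z) / (z - (t:ℂ)))
      = fun t : ℝ => -z + (1 + z^2) * (z - (t:ℂ))⁻¹ := by
    funext t
    field_simp [hne t]
    ring
  rw [heq]
  refine (integrable_const (-z)).add ?_
  refine Integrable.mono' (g := fun _ => ‖1 + z^2‖ / z.im)
    (integrable_const _) ?_ ?_
  · exact (continuous_const.mul (Continuous.inv₀ (by continuity) hne)).aestronglyMeasurable
  · refine Filter.Eventually.of_forall fun t => ?_
    rw [norm_mul, norm_inv]
    have h1 : z.im ≤ ‖z - (t:ℂ)‖ := by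
      have := Complex.abs_im_le_norm (z - (t:ℂ))
      simp only [Complex.sub_im, Complex.ofReal_im, sub_zero] at this
      exact le_trans (le_abs_self _) this
    have h2 : (0:ℝ) < ‖z - (t:ℂ)‖ := lt_of_lt_of_le hz h1
    rw [div_eq_mul_inv]
    have : ‖z - (t:ℂ)‖⁻¹ ≤ (z.im)⁻¹ := by
      apply inv_anti₀ hz
      simpa using h1
    exact mul_le_mul_of_nonneg_left this (by positivity)

lemma aux_im_pt (x ε t : ℝ) (hε : 0 < ε) :
    ((1 + (t:ℂ) * ((x:ℂ) + (ε:ℂ)*I)) / (((x:ℂ) + (ε:ℂ)*I) - (t:ℂ))).im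
      = -(ε * (1+t^2) / ((x-t)^2 + ε^2)) := by
  have hd : ((x - t)^2 + ε^2) ≠ 0 := by positivity
  rw [Complex.div_im]
  simp [Complex.normSq_apply]
  rw [div_sub_div_same, ← neg_div]
  rw [div_eq_div_iff (by nlinarith) hd]
  ring

lemma aux_g_integrable (τ : Measure ℝ) [IsFiniteMeasure τ] (x ε : ℝ) (hε : 0 < ε) :
    Integrable (fun t : ℝ => ε * (1 + t^2) / ((x - t)^2 + ε^2)) τ := by
  have hzim : (((x:ℂ) + (ε:ℂ)*I)).im = ε := by simp
  have h := ((aux_integrable τ ((x:ℂ) + (ε:ℂ)*I) (by rw [hzim]; exact hε)).im).neg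
  have heq : (fun t : ℝ => -(((1 + (t:ℂ) * ((x:ℂ) + (ε:ℂ)*I)) / (((x:ℂ) + (ε:ℂ)*I) - (t:ℂ))).im))
      = fun t : ℝ => ε * (1 + t^2) / ((x - t)^2 + ε^2) := by
    funext t; rw [aux_im_pt x ε t hε]; ring
  simp only [RCLike.im_eq_complex_im] at h
  rwa [show (-fun t : ℝ => (((1 + (t:ℂ) * ((x:ℂ) + (ε:ℂ)*I)) / (((x:ℂ) + (ε:ℂ)*I) - (t:ℂ))).im))
      = fun t : ℝ => -(((1 + (t:ℂ) * ((x:ℂ) + (ε:ℂ)*I)) / (((x:ℂ) + (ε:ℂ)*I) - (t:ℂ))).im)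
    from rfl, heq] at h

lemma aux_key (μ : Measure ℝ) (b : ℝ) (τ : Measure ℝ) [IsFiniteMeasure τ]
    (hF : ∀ z : ℂ, 0 < z.im →
      Ftransform μ z = z - (b : ℂ) -
        ∫ t : ℝ, (1 + (t : ℂ) * z) / (z - (t : ℂ)) ∂τ)
    (x ε : ℝ) (hε : 0 < ε) :
    (Ftransform μ ((x:ℂ) + (ε:ℂ) * I)).im
      = ε + ∫ t, ε * (1 + t^2) / ((x - t)^2 + ε^2) ∂τ := by
  have hzim : (((x:ℂ) + (ε:ℂ)*I)).im = ε := by simp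
  have hpos : 0 < (((x:ℂ) + (ε:ℂ)*I)).im := by rw [hzim]; exact hε
  rw [hF _ hpos, Complex.sub_im, Complex.sub_im]
  have hint := integral_im (μ := τ)
    (f := fun t : ℝ => (1 + (t:ℂ) * ((x:ℂ) + (ε:ℂ)*I)) / (((x:ℂ) + (ε:ℂ)*I) - (t:ℂ)))
    (aux_integrable τ _ hpos)
  simp only [RCLike.im_eq_complex_im] at hint
  rw [← hint]
  have heq : ∫ t : ℝ, (((1 + (t:ℂ) * ((x:ℂ) + (ε:ℂ)*I)) / (((x:ℂ) + (ε:ℂ)*I) - (t:ℂ))).im) ∂τ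
      = -∫ t, ε * (1 + t^2) / ((x - t)^2 + ε^2) ∂τ := by
    rw [← integral_neg]
    congr 1
    funext t
    rw [aux_im_pt x ε t hε]
  rw [heq, hzim]
  simp

lemma aux_ball (τ : Measure ℝ) [IsFiniteMeasure τ] (x ε : ℝ) (hε : 0 < ε) :
    (τ (Metric.closedBall x ε)).toReal
      ≤ 2 * ε * ∫ t, ε * (1 + t^2) / ((x - t)^2 + ε^2) ∂τ := by
  have hg := aux_g_integrable τ x ε hε
  have h1 : (1/(2*ε)) * (τ (Metric.closedBall x ε)).toReal
      ≤ ∫ t in Metric.closedBall x ε, ε * (1 + t^2) / ((x - t)^2 + ε^2) ∂τ := by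
    apply setIntegral_ge_of_const_le_real measurableSet_closedBall (measure_ne_top τ _)
    · intro t ht
      rw [Real.closedBall_eq_Icc] at ht
      have h2 : (x - t)^2 ≤ ε^2 := by nlinarith [ht.1, ht.2]
      rw [div_le_div_iff₀ (by positivity) (by positivity)]
      nlinarith [sq_nonneg t]
    · exact hg.integrableOn
  have h2 : ∫ t in Metric.closedBall x ε, ε * (1 + t^2) / ((x - t)^2 + ε^2) ∂τ
      ≤ ∫ t, ε * (1 + t^2) / ((x - t)^2 + ε^2) ∂τ :=
    setIntegral_le_integral hg (Filter.Eventually.of_forall fun t => by positivity)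
  have h3 := le_trans h1 h2
  rw [div_mul_eq_mul_div, one_mul, div_le_iff₀ (by positivity)] at h3
  linarith

lemma aux_atom (τ : Measure ℝ) [IsFiniteMeasure τ] (x ε : ℝ) (hε : 0 < ε) :
    (1 + x^2) * (τ {x}).toReal
      ≤ ε * (ε + ∫ t, ε * (1 + t^2) / ((x - t)^2 + ε^2) ∂τ) := by
  have hg := aux_g_integrable τ x ε hε
  have h1 : (1 + x^2) * (τ {x}).toReal
      ≤ ∫ t in {x}, ε * (ε * (1 + t^2) / ((x - t)^2 + ε^2)) ∂τ := by
    apply setIntegral_ge_of_const_le_real (measurableSet_singleton x) (measure_ne_top τ _)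
    · intro t ht
      rw [mem_singleton_iff] at ht
      subst ht
      rw [show (t - t)^2 + ε^2 = ε^2 by ring]
      rw [mul_div_assoc', le_div_iff₀ (by positivity)]
      ring_nf
      nlinarith [sq_nonneg t]
    · exact (hg.const_mul ε).integrableOn
  have h2 : ∫ t in {x}, ε * (ε * (1 + t^2) / ((x - t)^2 + ε^2)) ∂τ
      ≤ ∫ t, ε * (ε * (1 + t^2) / ((x - t)^2 + ε^2)) ∂τ :=
    setIntegral_le_integral (hg.const_mul ε)
      (Filter.Eventually.of_forall fun t => by positivity)
  have h3 : ∫ t, ε * (ε * (1 + t^2) / ((x - t)^2 + ε^2)) ∂τ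
      = ε * ∫ t, ε * (1 + t^2) / ((x - t)^2 + ε^2) ∂τ := integral_const_mul _ _
  have h4 : 0 ≤ ∫ t, ε * (1 + t^2) / ((x - t)^2 + ε^2) ∂τ :=
    integral_nonneg fun t => by positivity
  nlinarith [le_trans h1 h2]

/-- let `μ` be a probability measure with Boolean generating pair `(b, τ)`.
Suppose there is an at most countable set `C ∋ 0` such that the boundary values
`lim_{ε→0⁺} Im F_μ(x+iε)` exist and are finite nonnegative for every `x ∉ C`, and
`lim_{ε→0⁺} ε F_μ(x+iε) = 0` for every `x ∈ C \ {0}`. Then `τ` restricted to `ℝ \ {0}`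
is Lebesgue absolutely continuous (equivalently, the Boolean Lévy measure of `μ` is). -/
theorem boolean_levy_measure_ac (μ : Measure ℝ) [IsProbabilityMeasure μ]
    (b : ℝ) (τ : Measure ℝ) [IsFiniteMeasure τ]
    (hF : ∀ z : ℂ, 0 < z.im →
      Ftransform μ z = z - (b : ℂ) -
        ∫ t : ℝ, (1 + (t : ℂ) * z) / (z - (t : ℂ)) ∂τ)
    (C : Set ℝ) (hC_count : C.Countable) (hC0 : (0 : ℝ) ∈ C)
    (h2 : ∀ x : ℝ, x ∉ C → ∃ L : ℝ, 0 ≤ L ∧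
      Tendsto (fun ε : ℝ => (Ftransform μ ((x : ℂ) + (ε : ℂ) * I)).im)
        (nhdsWithin 0 (Set.Ioi 0)) (nhds L))
    (h3 : ∀ x : ℝ, x ∈ C → x ≠ 0 →
      Tendsto (fun ε : ℝ => (ε : ℂ) * Ftransform μ ((x : ℂ) + (ε : ℂ) * I))
        (nhdsWithin 0 (Set.Ioi 0)) (nhds 0)) :
    τ.restrict {(0 : ℝ)}ᶜ ≪ (volume : Measure ℝ) := by
  classical
  -- Step 1: atoms in C \ {0} are τ-null
  have hatom : ∀ x ∈ C, x ≠ 0 → τ {x} = 0 := by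
    intro x hx hx0
    have ht := h3 x hx hx0
    have ht2 : Tendsto (fun ε : ℝ => ε * (Ftransform μ ((x:ℂ) + (ε:ℂ) * I)).im)
        (nhdsWithin 0 (Set.Ioi 0)) (nhds 0) := by
      have h := (Complex.continuous_im.tendsto 0).comp ht
      simp only [Function.comp_def, Complex.zero_im] at h
      refine h.congr fun ε => ?_
      simp [Complex.mul_im]
    have hle : ∀ᶠ ε : ℝ in nhdsWithin (0:ℝ) (Set.Ioi 0),
        (1 + x^2) * (τ {x}).toReal ≤ ε * (Ftransform μ ((x:ℂ) + (ε:ℂ) * I)).im := by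
      filter_upwards [self_mem_nhdsWithin] with ε hε
      rw [aux_key μ b τ hF x ε hε]
      exact aux_atom τ x ε hε
    have hle0 : (1 + x^2) * (τ {x}).toReal ≤ 0 := ge_of_tendsto ht2 hle
    have h0 : (τ {x}).toReal = 0 := by nlinarith [ENNReal.toReal_nonneg (a := τ {x})]
    exact (ENNReal.toReal_eq_zero_iff _).1 h0 |>.resolve_right (measure_ne_top τ _)
  -- singular part
  set σ := τ.singularPart volume with hσdef
  have hσle : ∀ s : Set ℝ, σ s ≤ τ s := fun s =>
    Measure.le_iff'.1 (Measure.singularPart_le τ volume) s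
  obtain ⟨S, hSm, hσS, hvolS⟩ := τ.mutuallySingular_singularPart volume
  -- covering sets
  set A : ℕ → Set ℝ := fun n => {y | y ∉ C ∧ ∀ᶠ ε : ℝ in nhdsWithin (0:ℝ) (Set.Ioi 0),
    τ (Metric.closedBall y ε) ≤ (n : ENNReal) * volume (Metric.closedBall y ε)} with hAdef
  have hcover : Cᶜ ⊆ ⋃ n, A n := by
    intro y hy
    obtain ⟨L, hL0, hLt⟩ := h2 y hy
    refine mem_iUnion.2 ⟨⌈L⌉₊ + 1, hy, ?_⟩
    have hev : ∀ᶠ ε : ℝ in nhdsWithin (0:ℝ) (Set.Ioi 0),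
        (Ftransform μ ((y:ℂ) + (ε:ℂ) * I)).im ≤ L + 1 :=
      hLt.eventually (eventually_le_nhds (by linarith))
    filter_upwards [hev, self_mem_nhdsWithin] with ε hFle hε
    have hε' : (0:ℝ) < ε := hε
    have hkey := aux_key μ b τ hF y ε hε
    have hball := aux_ball τ y ε hε
    have hb2 : (τ (Metric.closedBall y ε)).toReal ≤ 2 * ε * (L + 1) := by
      have hint : ∫ t, ε * (1 + t^2) / ((y - t)^2 + ε^2) ∂τ ≤ L + 1 := by
        rw [hkey] at hFle; linarith
      have h0 : (0:ℝ) ≤ ∫ t, ε * (1 + t^2) / ((y - t)^2 + ε^2) ∂τ :=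
        integral_nonneg fun t => div_nonneg (by nlinarith [sq_nonneg t]) (by positivity)
      nlinarith [mul_le_mul_of_nonneg_left hint (by linarith : (0:ℝ) ≤ 2*ε)]
    have hn : L + 1 ≤ (⌈L⌉₊ + 1 : ℕ) := by
      push_cast
      have := Nat.le_ceil L
      linarith
    rw [Real.volume_closedBall]
    calc τ (Metric.closedBall y ε)
        = ENNReal.ofReal (τ (Metric.closedBall y ε)).toReal :=
          (ENNReal.ofReal_toReal (measure_ne_top τ _)).symm
      _ ≤ ENNReal.ofReal ((⌈L⌉₊ + 1 : ℕ) * (2 * ε)) := by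
          apply ENNReal.ofReal_le_ofReal
          calc (τ (Metric.closedBall y ε)).toReal ≤ 2 * ε * (L + 1) := hb2
            _ ≤ (⌈L⌉₊ + 1 : ℕ) * (2 * ε) := by nlinarith [mul_le_mul_of_nonneg_left hn (by linarith : (0:ℝ) ≤ 2*ε)]
      _ = ((⌈L⌉₊ + 1 : ℕ) : ENNReal) * ENNReal.ofReal (2 * ε) := by
          rw [ENNReal.ofReal_mul (by positivity)]
          congr 1
          exact ENNReal.ofReal_natCast _
  -- the Vitali family argument
  have hAn : ∀ n : ℕ, σ (A n ∩ Sᶜ) = 0 := by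
    intro n
    have hv := Besicovitch.vitaliFamily (σ : Measure ℝ)
    have hle : σ (A n ∩ Sᶜ) ≤ ((n : NNReal) • (volume : Measure ℝ)) (A n ∩ Sᶜ) := by
      apply VitaliFamily.measure_le_of_frequently_le
        (v := Besicovitch.vitaliFamily (σ : Measure ℝ)) _ Measure.AbsolutelyContinuous.rfl
      intro y hy
      have hev : ∀ᶠ ε : ℝ in nhdsWithin (0:ℝ) (Set.Ioi 0),
          σ (Metric.closedBall y ε) ≤ ((n : NNReal) • (volume : Measure ℝ)) (Metric.closedBall y ε) := by
        filter_upwards [hy.1.2] with ε hε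
        refine le_trans (hσle _) (le_trans hε ?_)
        simp [Measure.smul_apply, ENNReal.smul_def, ENNReal.coe_natCast]
      exact (Besicovitch.tendsto_filterAt σ y).frequently hev.frequently
    have hvol0 : (volume : Measure ℝ) (A n ∩ Sᶜ) = 0 :=
      measure_mono_null Set.inter_subset_right hvolS
    have hz : ((n : NNReal) • (volume : Measure ℝ)) (A n ∩ Sᶜ) = 0 := by
      simp [Measure.smul_apply, hvol0]
    exact le_antisymm (hz ▸ hle) zero_le
  have hσCc : σ Cᶜ = 0 := by
    have h1 : σ (Cᶜ ∩ Sᶜ) = 0 := by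
      have : Cᶜ ∩ Sᶜ ⊆ ⋃ n, (A n ∩ Sᶜ) := by
        intro y hy
        obtain ⟨n, hn⟩ := mem_iUnion.1 (hcover hy.1)
        exact mem_iUnion.2 ⟨n, hn, hy.2⟩
      refine measure_mono_null this ?_
      exact measure_iUnion_null hAn
    have hsub : Cᶜ ⊆ (Cᶜ ∩ Sᶜ) ∪ S := by
      intro y hy
      by_cases h : y ∈ S
      · exact Or.inr h
      · exact Or.inl ⟨hy, h⟩
    refine le_antisymm ?_ zero_le
    calc σ Cᶜ ≤ σ ((Cᶜ ∩ Sᶜ) ∪ S) := measure_mono hsub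
      _ ≤ σ (Cᶜ ∩ Sᶜ) + σ S := measure_union_le _ _
      _ = 0 := by rw [h1, hσS, add_zero]
      _ ≤ 0 := le_refl 0
  have hσC0 : σ (C \ {0}) = 0 := by
    have hCd : (C \ {0} : Set ℝ).Countable := hC_count.mono diff_subset
    have : C \ {0} = ⋃ x ∈ C \ {0}, ({x} : Set ℝ) := (Set.biUnion_of_singleton _).symm
    rw [this, measure_biUnion_null_iff hCd]
    intro x hx
    exact le_antisymm (le_trans (hσle _) (le_of_eq (hatom x hx.1 hx.2))) zero_le
  have hσ0c : σ {(0:ℝ)}ᶜ = 0 := by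
    have hsub : ({(0:ℝ)}ᶜ : Set ℝ) ⊆ Cᶜ ∪ (C \ {0}) := by
      intro y hy
      by_cases h : y ∈ C
      · exact Or.inr ⟨h, hy⟩
      · exact Or.inl h
    refine measure_mono_null hsub ?_
    exact le_antisymm (le_trans (measure_union_le _ _) (by rw [hσCc, hσC0, add_zero])) zero_le
  -- conclude
  refine Measure.AbsolutelyContinuous.mk fun s hsm hs => ?_
  rw [Measure.restrict_apply hsm]
  have hdec := τ.haveLebesgueDecomposition_add volume
  have : τ (s ∩ {(0:ℝ)}ᶜ) = σ (s ∩ {(0:ℝ)}ᶜ)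
      + (volume.withDensity (τ.rnDeriv volume)) (s ∩ {(0:ℝ)}ᶜ) := by
    conv_lhs => rw [hdec]
    simp [Measure.add_apply]
    rfl
  rw [this]
  have h1 : σ (s ∩ {(0:ℝ)}ᶜ) = 0 :=
    measure_mono_null Set.inter_subset_right hσ0c
  have h2 : (volume.withDensity (τ.rnDeriv volume)) (s ∩ {(0:ℝ)}ᶜ) = 0 := by
    apply withDensity_absolutelyContinuous volume (τ.rnDeriv volume)
    exact measure_mono_null Set.inter_subset_left hs
  rw [h1, h2, add_zero]
end

section
/- For m ∈ ℝ, consider the function k_m : ℝ∖{0} → ℝ defined by k_m(x) = (arctan(x−m) + π/2)/|x|. Then k_m is nondecreasing on (−∞,0) and nonincreasing on (0,∞) (i.e., unimodal with mode 0) if and only if m ≤ π/2. -/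
open Real Set

-- positivity of arctan shift
lemma arctan_pos_shift (t : ℝ) : 0 < Real.arctan t + Real.pi / 2 := by
  have := Real.neg_pi_div_two_lt_arctan t
  linarith

-- derivative of ψ t = (arctan t + π/2)(1+t^2) − t
lemma psi_hasDerivAt (t : ℝ) :
    HasDerivAt (fun t : ℝ => (Real.arctan t + Real.pi / 2) * (1 + t ^ 2) - t)
      ((Real.arctan t + Real.pi / 2) * (2 * t)) t := by
  have h1 : HasDerivAt (fun t : ℝ => Real.arctan t + Real.pi / 2) (1 / (1 + t ^ 2)) t :=
    (Real.hasDerivAt_arctan t).add_const _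
  have h2 : HasDerivAt (fun t : ℝ => 1 + t ^ 2) (2 * t) t := by
    simpa using ((hasDerivAt_pow 2 t).const_add 1)
  have h3 := (h1.mul h2).sub (hasDerivAt_id t)
  have hne : (1 : ℝ) + t ^ 2 ≠ 0 := by positivity
  exact h3.congr_deriv (by rw [one_div, inv_mul_cancel₀ hne]; ring)

lemma key_ineq (t : ℝ) : t + Real.pi / 2 ≤ (Real.arctan t + Real.pi / 2) * (1 + t ^ 2) := by
  set ψ : ℝ → ℝ := fun t => (Real.arctan t + Real.pi / 2) * (1 + t ^ 2) - t with hψ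
  have hdiff : ∀ x, HasDerivAt ψ ((Real.arctan x + Real.pi / 2) * (2 * x)) x :=
    fun x => psi_hasDerivAt x
  have hψ0 : ψ 0 = Real.pi / 2 := by simp [hψ]
  have hmain : Real.pi / 2 ≤ ψ t := by
    rcases le_or_gt 0 t with ht | ht
    · have hmono : MonotoneOn ψ (Set.Ici 0) := by
        apply monotoneOn_of_deriv_nonneg (convex_Ici 0)
          (fun x _ => (hdiff x).continuousAt.continuousWithinAt)
          (fun x _ => (hdiff x).differentiableAt.differentiableWithinAt)
        intro x hx
        rw [(hdiff x).deriv]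
        have hx0 : 0 < x := by simpa using hx
        have := arctan_pos_shift x
        positivity
      have := hmono (Set.self_mem_Ici) (by exact ht) ht
      simpa [hψ0] using this
    · have hanti : AntitoneOn ψ (Set.Iic 0) := by
        apply antitoneOn_of_deriv_nonpos (convex_Iic 0)
          (fun x _ => (hdiff x).continuousAt.continuousWithinAt)
          (fun x _ => (hdiff x).differentiableAt.differentiableWithinAt)
        intro x hx
        rw [(hdiff x).deriv]
        have hx0 : x < 0 := by simpa using hx
        have := arctan_pos_shift x
        nlinarith
      have := hanti (by exact ht.le) (Set.self_mem_Iic) ht.le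
      simpa [hψ0] using this
  simp only [hψ] at hmain
  linarith

-- derivative of F(x) = (arctan(x-m)+π/2)/x at x ≠ 0
lemma F_hasDerivAt (m x : ℝ) (hx : x ≠ 0) :
    HasDerivAt (fun x : ℝ => (Real.arctan (x - m) + Real.pi / 2) / x)
      (((1 / (1 + (x - m) ^ 2)) * x - (Real.arctan (x - m) + Real.pi / 2) * 1) / x ^ 2) x := by
  have h1 : HasDerivAt (fun x : ℝ => Real.arctan (x - m) + Real.pi / 2)
      (1 / (1 + (x - m) ^ 2)) x := by
    have := (Real.hasDerivAt_arctan (x - m)).comp x ((hasDerivAt_id x).sub_const m)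
    simpa using this.add_const (Real.pi / 2)
  exact h1.div (hasDerivAt_id x) hx

lemma G_hasDerivAt (m x : ℝ) (hx : x ≠ 0) :
    HasDerivAt (fun x : ℝ => (Real.arctan (x - m) + Real.pi / 2) / (-x))
      (((1 / (1 + (x - m) ^ 2)) * (-x) - (Real.arctan (x - m) + Real.pi / 2) * (-1)) / (-x) ^ 2)
      x := by
  have h1 : HasDerivAt (fun x : ℝ => Real.arctan (x - m) + Real.pi / 2)
      (1 / (1 + (x - m) ^ 2)) x := by
    have := (Real.hasDerivAt_arctan (x - m)).comp x ((hasDerivAt_id x).sub_const m)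
    simpa using this.add_const (Real.pi / 2)
  exact h1.div (hasDerivAt_id x).neg (by simpa using hx)

-- antitone on a set implies deriv nonpos at interior-ish points (right accumulation)
lemma deriv_nonpos_of_antitoneOn {f : ℝ → ℝ} {d x : ℝ} (hx : 0 < x)
    (hf : AntitoneOn f (Set.Ioi 0)) (hd : HasDerivAt f d x) : d ≤ 0 := by
  have htend : Filter.Tendsto (slope f x) (nhdsWithin x (Set.Ioi x)) (nhds d) :=
    (hasDerivAt_iff_tendsto_slope.mp hd).mono_left
      (nhdsWithin_mono x (fun y hy => ne_of_gt hy))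
  refine le_of_tendsto htend ?_
  filter_upwards [self_mem_nhdsWithin] with y hy
  have hyx : x < y := hy
  have h1 : f y ≤ f x := hf hx (lt_trans hx hyx) hyx.le
  have : slope f x y = (f y - f x) / (y - x) := by
    simp [slope_def_field, div_eq_div_iff]
  rw [this]
  apply div_nonpos_of_nonpos_of_nonneg <;> linarith

/-- the function `k_m(x) = (arctan(x-m) + π/2)/|x|` is unimodal with mode 0
(nondecreasing on `(-∞,0)` and nonincreasing on `(0,∞)`) if and only if `m ≤ π/2`. -/
theorem arctan_shift_unimodal_iff (m : ℝ) :
    (MonotoneOn (fun x : ℝ => (Real.arctan (x - m) + Real.pi / 2) / |x|) (Set.Iio 0) ∧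
      AntitoneOn (fun x : ℝ => (Real.arctan (x - m) + Real.pi / 2) / |x|) (Set.Ioi 0))
      ↔ m ≤ Real.pi / 2 := by
  constructor
  · rintro ⟨-, hA⟩
    by_contra hm
    push_neg at hm
    have hm0 : 0 < m := lt_trans pi_div_two_pos hm
    have hF : AntitoneOn (fun x : ℝ => (Real.arctan (x - m) + Real.pi / 2) / x)
        (Set.Ioi 0) := by
      intro a ha b hb hab
      have := hA ha hb hab
      simpa [abs_of_pos (show (0:ℝ) < a from ha), abs_of_pos (show (0:ℝ) < b from hb)]
        using this
    have hd := F_hasDerivAt m m (ne_of_gt hm0)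
    have hle := deriv_nonpos_of_antitoneOn hm0 hF hd
    have : (1 / (1 + (m - m) ^ 2) * m - (Real.arctan (m - m) + Real.pi / 2) * 1) / m ^ 2
        = (m - Real.pi / 2) / m ^ 2 := by
      simp [Real.arctan_zero]
    rw [this] at hle
    have hpos : 0 < (m - Real.pi / 2) / m ^ 2 := div_pos (by linarith) (by positivity)
    linarith
  · intro hm
    constructor
    · -- monotone on Iio 0
      have hG : MonotoneOn (fun x : ℝ => (Real.arctan (x - m) + Real.pi / 2) / (-x))
          (Set.Iio 0) := by
        apply monotoneOn_of_deriv_nonneg (convex_Iio 0)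
        · intro x hx
          exact (G_hasDerivAt m x (ne_of_lt hx)).continuousAt.continuousWithinAt
        · intro x hx
          rw [interior_Iio] at hx
          exact (G_hasDerivAt m x (ne_of_lt hx)).differentiableAt.differentiableWithinAt
        · intro x hx
          rw [interior_Iio] at hx
          rw [(G_hasDerivAt m x (ne_of_lt hx)).deriv]
          have hx0 : x < 0 := hx
          have h1 : (0:ℝ) < 1 + (x - m) ^ 2 := by positivity
          have h2 := arctan_pos_shift (x - m)
          apply div_nonneg _ (by positivity)
          have : (0:ℝ) < 1 / (1 + (x - m) ^ 2) := by positivity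
          nlinarith
      intro a ha b hb hab
      have := hG ha hb hab
      simpa [abs_of_neg (show a < 0 from ha), abs_of_neg (show b < 0 from hb)] using this
    · -- antitone on Ioi 0
      have hF : AntitoneOn (fun x : ℝ => (Real.arctan (x - m) + Real.pi / 2) / x)
          (Set.Ioi 0) := by
        apply antitoneOn_of_deriv_nonpos (convex_Ioi 0)
        · intro x hx
          exact (F_hasDerivAt m x (ne_of_gt hx)).continuousAt.continuousWithinAt
        · intro x hx
          rw [interior_Ioi] at hx
          exact (F_hasDerivAt m x (ne_of_gt hx)).differentiableAt.differentiableWithinAt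
        · intro x hx
          rw [interior_Ioi] at hx
          rw [(F_hasDerivAt m x (ne_of_gt hx)).deriv]
          have hx0 : 0 < x := hx
          have h1 : (0:ℝ) < 1 + (x - m) ^ 2 := by positivity
          apply div_nonpos_of_nonpos_of_nonneg _ (by positivity)
          have hkey := key_ineq (x - m)
          -- x ≤ (arctan (x-m) + π/2) * (1 + (x-m)^2)
          have hxle : x ≤ (Real.arctan (x - m) + Real.pi / 2) * (1 + (x - m) ^ 2) := by
            linarith
          rw [sub_nonpos, mul_one]
          rw [div_mul_eq_mul_div, div_le_iff₀ h1] at *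
          nlinarith [arctan_pos_shift (x - m)]
      intro a ha b hb hab
      have := hF ha hb hab
      simpa [abs_of_pos (show (0:ℝ) < a from ha), abs_of_pos (show (0:ℝ) < b from hb)]
        using this
end

section
/- Let G be the Cauchy transform of the standard normal distribution N(0,1), i.e., G(z) = ∫_ℝ 1/(z−x) dN(0,1)(x) for z ∈ ℂ⁺. Then G is holomorphic on ℂ⁺ and satisfies the differential equation G′(z) = 1 − z·G(z) for all z ∈ ℂ⁺. -/
open MeasureTheory Complex ProbabilityTheory

namespace GaussODE

open Real Metric

noncomputable def φ : ℝ → ℝ := gaussianPDFReal 0 1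

lemma φ_eq (x : ℝ) : φ x = (√(2 * π))⁻¹ * rexp (-(1/2) * x ^ 2) := by
  simp only [φ, gaussianPDFReal, NNReal.coe_one, mul_one, sub_zero]
  rw [show -x ^ 2 / 2 = -(1/2) * x ^ 2 by ring]

lemma φ_nonneg (x : ℝ) : 0 ≤ φ x := gaussianPDFReal_nonneg 0 1 x

lemma φ_continuous : Continuous φ := by
  have : φ = fun x => (√(2 * π))⁻¹ * rexp (-(1/2) * x ^ 2) := funext φ_eq
  rw [this]; continuity

lemma φ_integrable : Integrable φ := integrable_gaussianPDFReal 0 1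

lemma φ_hasDerivAt (x : ℝ) : HasDerivAt φ (-x * φ x) x := by
  have h1 : HasDerivAt (fun x : ℝ => -(1/2) * x ^ 2) (-(1/2) * (2 * x ^ 1)) x :=
    (hasDerivAt_pow 2 x).const_mul _
  have h2 := (h1.exp).const_mul (√(2 * π))⁻¹
  have : (fun x : ℝ => (√(2 * π))⁻¹ * rexp (-(1/2) * x ^ 2)) = φ := (funext φ_eq).symm
  rw [this] at h2
  refine h2.congr_deriv ?_
  rw [φ_eq]; ring

lemma x_φ_integrable : Integrable (fun x => |x| * φ x) := by
  have h : Integrable (fun x : ℝ => x * φ x) := by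
    have h0 : Integrable (fun x : ℝ => (√(2 * π))⁻¹ * (x * rexp (-(1/2) * x ^ 2))) :=
      ((integrable_mul_exp_neg_mul_sq (by norm_num : (0:ℝ) < 1/2))).const_mul _
    refine h0.congr (ae_of_all _ fun x => ?_)
    show (√(2 * π))⁻¹ * (x * rexp (-(1/2) * x ^ 2)) = x * φ x
    rw [φ_eq]; ring
  have := h.abs
  refine this.congr (ae_of_all _ fun x => ?_)
  show |x * φ x| = |x| * φ x
  rw [abs_mul, _root_.abs_of_nonneg (φ_nonneg x)]

lemma sub_ne {z : ℂ} (hz : 0 < z.im) (x : ℝ) : z - (x : ℂ) ≠ 0 := by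
  intro h
  have : (z - (x : ℂ)).im = 0 := by rw [h]; simp
  simp only [sub_im, ofReal_im, sub_zero] at this
  linarith

lemma norm_inv_le {z : ℂ} {c : ℝ} (hc : 0 < c) (hcz : c ≤ z.im) (x : ℝ) :
    ‖(z - (x : ℂ))⁻¹‖ ≤ c⁻¹ := by
  rw [norm_inv]
  refine inv_anti₀ hc ?_
  calc c ≤ z.im := hcz
    _ = (z - (x : ℂ)).im := by simp
    _ ≤ |(z - (x : ℂ)).im| := le_abs_self _
    _ ≤ ‖z - (x : ℂ)‖ := abs_im_le_norm _
    _ = ‖z - (x : ℂ)‖ := rfl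

lemma integral_gaussian_real (g : ℝ → ℂ) :
    ∫ x, g x ∂(gaussianReal 0 1) = ∫ x, φ x • g x := by
  rw [gaussianReal_of_var_ne_zero 0 one_ne_zero]
  have hmeas : Measurable fun x => Real.toNNReal (φ x) :=
    (measurable_gaussianPDFReal 0 1).real_toNNReal
  have h1 : volume.withDensity (gaussianPDF 0 1)
      = volume.withDensity fun x => (((φ x).toNNReal : NNReal) : ENNReal) := rfl
  rw [h1, integral_withDensity_eq_integral_smul hmeas g]
  refine integral_congr_ae (ae_of_all _ fun x => ?_)
  show (φ x).toNNReal • g x = φ x • g x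
  rw [NNReal.smul_def, Real.coe_toNNReal _ (φ_nonneg x)]

lemma hasDerivAt_inv_sub {z : ℂ} (hz : 0 < z.im) (x : ℝ) :
    HasDerivAt (fun t : ℝ => (z - (t : ℂ))⁻¹) (((z - (x : ℂ)) ^ 2)⁻¹) x := by
  have h0 : HasDerivAt (fun w : ℂ => z - w) (-1) (x : ℂ) := (hasDerivAt_id _).const_sub z
  have h1 := h0.inv (sub_ne hz x)
  have h2 : HasDerivAt (fun w : ℂ => (z - w)⁻¹) (((z - (x : ℂ)) ^ 2)⁻¹) (x : ℂ) := by
    refine h1.congr_deriv ?_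
    field_simp
  exact h2.comp_ofReal

/-- Stein's identity for the standard Gaussian applied to `x ↦ (z - x)⁻¹`. -/
lemma stein {z : ℂ} (hz : 0 < z.im) :
    ∫ x, (x : ℂ) * (z - (x : ℂ))⁻¹ ∂(gaussianReal 0 1)
      = ∫ x, ((z - (x : ℂ)) ^ 2)⁻¹ ∂(gaussianReal 0 1) := by
  rw [integral_gaussian_real, integral_gaussian_real]
  set f : ℝ → ℂ := fun x => φ x • (z - (x : ℂ))⁻¹ with hf
  set A : ℝ → ℂ := fun x => φ x • ((z - (x : ℂ)) ^ 2)⁻¹ with hA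
  set B : ℝ → ℂ := fun x => (-x * φ x) • (z - (x : ℂ))⁻¹ with hB
  have hcont_inv : Continuous fun x : ℝ => (z - (x : ℂ))⁻¹ :=
    (continuous_const.sub Complex.continuous_ofReal).inv₀ (sub_ne hz)
  have hcont_inv2 : Continuous fun x : ℝ => ((z - (x : ℂ)) ^ 2)⁻¹ :=
    ((continuous_const.sub Complex.continuous_ofReal).pow 2).inv₀
      (fun x => pow_ne_zero 2 (sub_ne hz x))
  have hderiv : ∀ x, HasDerivAt f (A x + B x) x := by
    intro x
    have h := (φ_hasDerivAt x).smul (hasDerivAt_inv_sub hz x)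
    exact h
  have hAint : Integrable A := by
    refine Integrable.mono' ((φ_integrable.const_mul ((z.im)⁻¹ ^ 2)).congr
      (ae_of_all _ fun x => mul_comm _ _))
      ((φ_continuous.smul hcont_inv2).aestronglyMeasurable) (ae_of_all _ fun x => ?_)
    simp only [hA]
    rw [norm_smul, Real.norm_eq_abs, _root_.abs_of_nonneg (φ_nonneg x)]
    have hb : ‖((z - (x : ℂ)) ^ 2)⁻¹‖ ≤ (z.im)⁻¹ ^ 2 := by
      rw [← inv_pow, norm_pow]
      exact pow_le_pow_left₀ (norm_nonneg _) (norm_inv_le hz le_rfl x) 2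
    exact mul_le_mul_of_nonneg_left hb (φ_nonneg x)
  have hBint : Integrable B := by
    refine Integrable.mono' ((x_φ_integrable.mul_const ((z.im)⁻¹)))
      ((((φ_continuous.mul continuous_id).neg).smul hcont_inv).congr
        (fun x => by
          show (-(φ x * x)) • (z - (x : ℂ))⁻¹ = B x
          simp only [hB]; congr 1; ring)).aestronglyMeasurable
      (ae_of_all _ fun x => ?_)
    simp only [hB]
    rw [norm_smul, Real.norm_eq_abs, abs_mul, abs_neg, _root_.abs_of_nonneg (φ_nonneg x)]
    exact mul_le_mul_of_nonneg_left (norm_inv_le hz le_rfl x)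
      (mul_nonneg (abs_nonneg x) (φ_nonneg x))
  have hfint : Integrable f := by
    refine Integrable.mono' ((φ_integrable.const_mul ((z.im)⁻¹)).congr
      (ae_of_all _ fun x => mul_comm _ _))
      ((φ_continuous.smul hcont_inv).aestronglyMeasurable) (ae_of_all _ fun x => ?_)
    simp only [hf]
    rw [norm_smul, Real.norm_eq_abs, _root_.abs_of_nonneg (φ_nonneg x)]
    exact mul_le_mul_of_nonneg_left (norm_inv_le hz le_rfl x) (φ_nonneg x)
  have hzero : ∫ x, (A x + B x) = 0 :=
    integral_eq_zero_of_hasDerivAt_of_integrable hderiv (hAint.add hBint) hfint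
  rw [integral_add hAint hBint] at hzero
  have h1 : (fun x : ℝ => φ x • ((x : ℂ) * (z - (x : ℂ))⁻¹)) = fun x => - B x := by
    funext x
    simp only [hB]
    calc φ x • ((x : ℂ) * (z - (x : ℂ))⁻¹)
        = φ x • (x • (z - (x : ℂ))⁻¹) := by congr 1
      _ = (φ x * x) • (z - (x : ℂ))⁻¹ := smul_smul _ _ _
      _ = -((-x * φ x) • (z - (x : ℂ))⁻¹) := by rw [← neg_smul]; congr 1; ring
  calc ∫ x, φ x • ((x : ℂ) * (z - (x : ℂ))⁻¹) = ∫ x, - B x := by rw [h1]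
    _ = - ∫ x, B x := integral_neg B
    _ = ∫ x, A x := by linear_combination -hzero
    _ = ∫ x, φ x • ((z - (x : ℂ)) ^ 2)⁻¹ := rfl

end GaussODE

/-- the Cauchy transform `G` of the standard normal distribution `N(0,1)`
is holomorphic on the upper half-plane and satisfies `G'(z) = 1 - z G(z)` there. -/
theorem gaussian_cauchyTransform_ode :
    ∀ z : ℂ, 0 < z.im →
      HasDerivAt (cauchyTransform (gaussianReal 0 1))
        (1 - z * cauchyTransform (gaussianReal 0 1) z) z := by
  intro z hz
  set μ := gaussianReal 0 1 with hμ
  have hε : 0 < z.im / 2 := by linarith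
  -- measurability of the integrand for every parameter value
  have hmeas : ∀ w : ℂ, AEStronglyMeasurable (fun x : ℝ => (w - (x : ℂ))⁻¹) μ := fun w =>
    ((measurable_const.sub Complex.measurable_ofReal).inv).aestronglyMeasurable
  have hmeas' : AEStronglyMeasurable (fun x : ℝ => -(((z - (x : ℂ)) ^ 2)⁻¹)) μ :=
    ((((measurable_const.sub Complex.measurable_ofReal).pow_const 2).inv).neg).aestronglyMeasurable
  -- membership in the ball implies the imaginary part stays above z.im / 2
  have him : ∀ w ∈ Metric.ball z (z.im / 2), z.im / 2 ≤ w.im := by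
    intro w hw
    have h1 : |(w - z).im| ≤ ‖w - z‖ := Complex.abs_im_le_norm (w - z)
    have h2 : ‖w - z‖ < z.im / 2 := by
      rw [Metric.mem_ball] at hw
      simpa [dist_eq_norm] using hw
    have h3 : |w.im - z.im| < z.im / 2 := by
      have : (w - z).im = w.im - z.im := by simp
      rw [this] at h1; linarith
    have := abs_lt.mp h3
    linarith [this.1]
  have hInt : Integrable (fun x : ℝ => (z - (x : ℂ))⁻¹) μ := by
    refine Integrable.mono' (integrable_const ((z.im)⁻¹)) (hmeas z) (ae_of_all _ fun x => ?_)
    exact GaussODE.norm_inv_le hz le_rfl x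
  have key := hasDerivAt_integral_of_dominated_loc_of_deriv_le (μ := μ)
      (F := fun w (x : ℝ) => (w - (x : ℂ))⁻¹)
      (F' := fun w (x : ℝ) => -(((w - (x : ℂ)) ^ 2)⁻¹))
      (x₀ := z) (bound := fun _ => ((z.im / 2)⁻¹) ^ 2) (Metric.ball_mem_nhds z hε)
      (Filter.Eventually.of_forall fun w => hmeas w) hInt hmeas' ?_ ?_ ?_
  · -- use `key` to conclude
    have hG : HasDerivAt (cauchyTransform μ) (∫ x, -(((z - (x : ℂ)) ^ 2)⁻¹) ∂μ) z := key.2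
    have hval : (∫ x, -(((z - (x : ℂ)) ^ 2)⁻¹) ∂μ) = 1 - z * cauchyTransform μ z := by
      rw [integral_neg, ← GaussODE.stein hz]
      have hint1 : Integrable (fun _ : ℝ => (1 : ℂ)) μ := integrable_const 1
      have hint2 : Integrable (fun x : ℝ => z * (z - (x : ℂ))⁻¹) μ := hInt.const_mul z
      have h1 : cauchyTransform μ z = ∫ x, (z - (x : ℂ))⁻¹ ∂μ := rfl
      have h2 : z * cauchyTransform μ z = ∫ x, z * (z - (x : ℂ))⁻¹ ∂μ := by
        rw [h1, ← integral_const_mul]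
      have h3 : (1 : ℂ) = ∫ _ : ℝ, (1 : ℂ) ∂μ := by simp
      rw [h2, h3, ← integral_sub hint1 hint2]
      rw [← integral_neg]
      refine integral_congr_ae (ae_of_all _ fun x => ?_)
      have hne := GaussODE.sub_ne hz x
      field_simp
      try ring
    rwa [hval] at hG
  · -- bound
    refine ae_of_all _ fun x w hw => ?_
    have hwim := him w hw
    have h1 : ‖(w - (x : ℂ))⁻¹‖ ≤ (z.im / 2)⁻¹ := GaussODE.norm_inv_le hε hwim x
    have : ‖-(((w - (x : ℂ)) ^ 2)⁻¹)‖ = ‖(w - (x : ℂ))⁻¹‖ ^ 2 := by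
      rw [norm_neg, ← inv_pow, norm_pow]
    rw [this]
    exact pow_le_pow_left₀ (norm_nonneg _) h1 2
  · exact integrable_const _
  · -- differentiability in the parameter
    refine ae_of_all _ fun x w hw => ?_
    have hwim := him w hw
    have hwpos : 0 < w.im := lt_of_lt_of_le hε hwim
    have hne : w - (x : ℂ) ≠ 0 := GaussODE.sub_ne hwpos x
    have h0 : HasDerivAt (fun w : ℂ => w - (x : ℂ)) 1 w := (hasDerivAt_id w).sub_const _
    have h1 := h0.inv hne
    refine h1.congr_deriv ?_
    field_simp
end

section
/- For every x > 0, the following two-sided inequality holds: (1/2)·( e^{x²}/x − √( (e^{x²}/x)² − π ) ) ≤ h(x) ≤ (1/2)·( e^{x²}/x + √( (e^{x²}/x)² − π ) ), where h(x) = ∫₀^x e^{t²} dt. (Note that (e^{x²}/x)² ≥ 2e > π for all x > 0, so the square roots are real.) -/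
open Real

noncomputable def Haux (x : ℝ) : ℝ := ∫ t in (0 : ℝ)..x, Real.exp (t ^ 2)

lemma cont_aux : Continuous fun t : ℝ => Real.exp (t ^ 2) := by continuity

lemma Haux_hasDeriv (x : ℝ) : HasDerivAt Haux (Real.exp (x ^ 2)) x := by
  exact intervalIntegral.integral_hasDerivAt_right
    (cont_aux.intervalIntegrable _ _)
    (cont_aux.stronglyMeasurableAtFilter _ _) cont_aux.continuousAt

lemma Haux_zero : Haux 0 = 0 := intervalIntegral.integral_same

lemma Haux_nonneg {x : ℝ} (hx : 0 ≤ x) : 0 ≤ Haux x :=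
  intervalIntegral.integral_nonneg hx (fun t _ => (Real.exp_pos _).le)

lemma Haux_le {x : ℝ} (hx : 0 ≤ x) : Haux x ≤ x * Real.exp (x ^ 2) := by
  have h1 : Haux x ≤ ∫ t in (0 : ℝ)..x, Real.exp (x ^ 2) := by
    apply intervalIntegral.integral_mono_on hx
      (cont_aux.intervalIntegrable _ _) (intervalIntegrable_const)
    intro t ht
    have h := ht.1; have h2 := ht.2
    exact Real.exp_le_exp.mpr (by nlinarith)
  simpa using h1

noncomputable def Gaux (x : ℝ) : ℝ :=
  Real.exp (x ^ 2) * Real.exp (x ^ 2) - (Haux x) ^ 2 - Real.pi / 4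

noncomputable def Faux (x : ℝ) : ℝ :=
  Real.exp (x ^ 2) * Haux x - x * (Haux x) ^ 2 - (Real.pi / 4) * x

lemma exp_sq_hasDeriv (x : ℝ) :
    HasDerivAt (fun x : ℝ => Real.exp (x ^ 2)) (Real.exp (x ^ 2) * (2 * x)) x := by
  have := (hasDerivAt_pow 2 x).exp
  simpa using this

lemma Gaux_hasDeriv (x : ℝ) :
    HasDerivAt Gaux (Real.exp (x ^ 2) * (2 * x) * Real.exp (x ^ 2) +
      Real.exp (x ^ 2) * (Real.exp (x ^ 2) * (2 * x)) -
      2 * Haux x * Real.exp (x ^ 2)) x := by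
  have h1 := (exp_sq_hasDeriv x).mul (exp_sq_hasDeriv x)
  have h2 := (Haux_hasDeriv x).pow 2
  have := (h1.sub h2).sub_const (Real.pi / 4)
  convert this using 1
  · rfl
  · rfl
  · rfl
  simp

lemma Gaux_pos {x : ℝ} (hx : 0 ≤ x) : 0 < Gaux x := by
  have hmono : MonotoneOn Gaux (Set.Ici (0 : ℝ)) := by
    apply monotoneOn_of_deriv_nonneg (convex_Ici 0)
    · exact Continuous.continuousOn (by
        apply Continuous.sub
        apply Continuous.sub ((cont_aux).mul (cont_aux))
        · exact (intervalIntegral.continuous_primitive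
            (fun a b => cont_aux.intervalIntegrable a b) 0).pow 2
        · exact continuous_const)
    · intro y hy
      exact ((Gaux_hasDeriv y).differentiableAt).differentiableWithinAt
    · intro y hy
      rw [interior_Ici] at hy
      rw [(Gaux_hasDeriv y).deriv]
      have hy0 : (0 : ℝ) ≤ y := le_of_lt hy
      have h1 := Haux_le hy0
      have h2 := Haux_nonneg hy0
      have h3 := Real.exp_pos (y ^ 2)
      nlinarith
  have h0 : Gaux 0 ≤ Gaux x := hmono (Set.self_mem_Ici) (by exact hx) hx
  have : Gaux 0 = 1 - Real.pi / 4 := by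
    simp [Gaux, Haux_zero]
  have hpi : Real.pi < 4 := by
    have := Real.pi_lt_d2; linarith
  rw [this] at h0
  linarith

lemma Faux_hasDeriv (x : ℝ) : HasDerivAt Faux (Gaux x) x := by
  have h1 := (exp_sq_hasDeriv x).mul (Haux_hasDeriv x)
  have h2 := (hasDerivAt_id x).mul ((Haux_hasDeriv x).pow 2)
  have h3 := (hasDerivAt_id x).const_mul (Real.pi / 4)
  have := (h1.sub h2).sub h3
  convert this using 1
  · rfl
  · rfl
  · rfl
  simp [Gaux]; ring

lemma Faux_nonneg {x : ℝ} (hx : 0 ≤ x) : 0 ≤ Faux x := by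
  have hmono : MonotoneOn Faux (Set.Ici (0 : ℝ)) := by
    apply monotoneOn_of_deriv_nonneg (convex_Ici 0)
    · intro y _; exact ((Faux_hasDeriv y).differentiableAt).continuousAt.continuousWithinAt
    · intro y _; exact ((Faux_hasDeriv y).differentiableAt).differentiableWithinAt
    · intro y hy
      rw [interior_Ici] at hy
      rw [(Faux_hasDeriv y).deriv]
      exact (Gaux_pos hy.le).le
  have h0 : Faux 0 ≤ Faux x := hmono Set.self_mem_Ici hx hx
  have : Faux 0 = 0 := by simp [Faux, Haux_zero]
  linarith [h0, this.ge, this.le]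

/-- for every `x > 0`, with `h(x) = ∫₀^x e^{t²} dt`,
`(1/2)(e^{x²}/x - √((e^{x²}/x)² - π)) ≤ h(x) ≤ (1/2)(e^{x²}/x + √((e^{x²}/x)² - π))`. -/
theorem hReal_two_sided_bound (x : ℝ) (hx : 0 < x) :
    (1 / 2) * (Real.exp (x ^ 2) / x -
        Real.sqrt ((Real.exp (x ^ 2) / x) ^ 2 - Real.pi)) ≤
      (∫ t in (0 : ℝ)..x, Real.exp (t ^ 2)) ∧
    (∫ t in (0 : ℝ)..x, Real.exp (t ^ 2)) ≤
      (1 / 2) * (Real.exp (x ^ 2) / x +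
        Real.sqrt ((Real.exp (x ^ 2) / x) ^ 2 - Real.pi)) := by
  set h := Haux x with hh
  set a := Real.exp (x ^ 2) / x with ha
  have hF := Faux_nonneg hx.le
  have hE : Real.exp (x ^ 2) = a * x := by rw [ha]; field_simp
  have key : h ^ 2 - a * h + Real.pi / 4 ≤ 0 := by
    have : 0 ≤ a * x * h - x * h ^ 2 - Real.pi / 4 * x := by
      have := hF; unfold Faux at this; rw [hE] at this; linarith
    nlinarith
  have hsq : (2 * h - a) ^ 2 ≤ a ^ 2 - Real.pi := by nlinarith
  have habs : |2 * h - a| ≤ Real.sqrt (a ^ 2 - Real.pi) := by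
    have := Real.sqrt_le_sqrt hsq
    rwa [Real.sqrt_sq_eq_abs] at this
  rw [abs_le] at habs
  have hint : (∫ t in (0 : ℝ)..x, Real.exp (t ^ 2)) = h := rfl
  constructor <;> rw [hint] <;> [linarith [habs.2]; linarith [habs.1]]
end
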